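/- arXiv:2112.03432 — 4 statements merged into one kernel-verified Lean document; each statement's English description precedes it below -/
import Mathlib

section
/- Let Lambda be a symmetric positive definite d x d matrix with orthonormal eigenvectors u_1,...,u_d. Let cat: R^d -> R and theta_star in R^d satisfy |cat(u_i) - <u_i, theta_star>| <= C1*||u_i||_{Lambda^{-1}} + C2/T for each i = 1,...,d (C1, C2 >= 0, T > 0). Define theta_hat = sum_{i=1}^d cat(u_i) * u_i. Then for every v in R^d, |<v, theta_hat> - <v, theta_star>| <= sqrt(d)*C1*||v||_{Lambda^{-1}} + sqrt(d)*||v||_2*C2/T. -/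
open Matrix

/-- The (semi)norm ‖v‖_M = √(vᵀ M v) induced by a matrix M. -/
noncomputable def mnorm {d : ℕ} (M : Matrix (Fin d) (Fin d) ℝ) (v : Fin d → ℝ) : ℝ :=
  Real.sqrt (v ⬝ᵥ (M *ᵥ v))

/-- eigenbasis linear approximation to the Catoni estimates. -/
theorem stmt12 (d : ℕ) (Λ : Matrix (Fin d) (Fin d) ℝ) (hΛ : Λ.PosDef)
    (u : Fin d → Fin d → ℝ) (μev : Fin d → ℝ)
    (horth : ∀ i j, u i ⬝ᵥ u j = if i = j then (1 : ℝ) else 0)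
    (heig : ∀ i, Λ *ᵥ u i = μev i • u i)
    (cat : (Fin d → ℝ) → ℝ) (θs : Fin d → ℝ) (C1 C2 T : ℝ)
    (hC1 : 0 ≤ C1) (hC2 : 0 ≤ C2) (hT : 0 < T)
    (hcat : ∀ i, |cat (u i) - u i ⬝ᵥ θs| ≤ C1 * mnorm Λ⁻¹ (u i) + C2 / T) :
    ∀ v : Fin d → ℝ,
      |v ⬝ᵥ (∑ i, cat (u i) • u i) - v ⬝ᵥ θs|
        ≤ Real.sqrt d * C1 * mnorm Λ⁻¹ v
          + Real.sqrt d * Real.sqrt (v ⬝ᵥ v) * C2 / T := by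
  intro v
  set a : Fin d → ℝ := fun i => v ⬝ᵥ u i with ha
  -- eigenvalues positive
  have hune : ∀ i, u i ≠ 0 := by
    intro i h
    have := horth i i
    simp [h] at this
  have hμ : ∀ i, 0 < μev i := by
    intro i
    have h1 := hΛ.dotProduct_mulVec_pos (hune i)
    have : star (u i) ⬝ᵥ (Λ *ᵥ u i) = μev i := by
      simp [heig i, horth i i, dotProduct_smul]
    rwa [this] at h1
  -- Λ⁻¹ acts on eigenvectors
  have hinvΛ : Λ⁻¹ * Λ = 1 := Matrix.nonsing_inv_mul Λ (isUnit_iff_ne_zero.2 hΛ.det_pos.ne')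
  have hinv : ∀ i, Λ⁻¹ *ᵥ u i = (μev i)⁻¹ • u i := by
    intro i
    have h1 : Λ⁻¹ *ᵥ (Λ *ᵥ u i) = u i := by
      rw [Matrix.mulVec_mulVec, hinvΛ, Matrix.one_mulVec]
    rw [heig i, Matrix.mulVec_smul] at h1
    have := congrArg (fun w => (μev i)⁻¹ • w) h1
    simpa [smul_smul, inv_mul_cancel₀ (hμ i).ne'] using this
  -- mnorm of eigenvectors
  have hmu : ∀ i, mnorm Λ⁻¹ (u i) = Real.sqrt (μev i)⁻¹ := by
    intro i
    unfold mnorm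
    rw [hinv i]
    simp [dotProduct_smul, horth i i]
  -- U^T U = 1, so ∑ i, u i j * u i k = δ jk
  have hUUt : (Matrix.of u) * (Matrix.of u)ᵀ = 1 := by
    ext i j
    simpa [Matrix.mul_apply, Matrix.one_apply, dotProduct] using horth i j
  have hUtU := mul_eq_one_comm.mp hUUt
  have hsum_uu : ∀ j k, ∑ i, u i j * u i k = if j = k then (1:ℝ) else 0 := by
    intro j k
    have := congrFun (congrFun hUtU j) k
    simpa [Matrix.mul_apply, Matrix.one_apply] using this
  -- v as combination of eigenvectors
  have hv : v = ∑ i, a i • u i := by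
    funext j
    simp only [Finset.sum_apply, Pi.smul_apply, smul_eq_mul, ha, dotProduct]
    calc v j = ∑ k, v k * (if k = j then (1:ℝ) else 0) := by simp
        _ = ∑ k, v k * ∑ i, u i k * u i j := by
            simp_rw [hsum_uu]
        _ = ∑ i, ∑ k, v k * u i k * u i j := by
            rw [Finset.sum_comm]; congr 1; funext k; rw [Finset.mul_sum]; congr 1; funext i; ring
        _ = ∑ i, (∑ k, v k * u i k) * u i j := by
            congr 1; funext i; rw [Finset.sum_mul]
        _ = ∑ i, (∑ k, v k * u i k) * u i j := rfl
  have sum_dp : ∀ (f : Fin d → Fin d → ℝ) (w : Fin d → ℝ),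
      (∑ i, f i) ⬝ᵥ w = ∑ i, f i ⬝ᵥ w := by
    intro f w
    simp only [dotProduct, Finset.sum_apply, Finset.sum_mul]
    exact Finset.sum_comm
  have dp_sum : ∀ (w : Fin d → ℝ) (f : Fin d → Fin d → ℝ),
      w ⬝ᵥ (∑ i, f i) = ∑ i, w ⬝ᵥ f i := by
    intro w f
    simp only [dotProduct, Finset.sum_apply, Finset.mul_sum]
    exact Finset.sum_comm
  -- LHS as a sum
  have hlhs : v ⬝ᵥ (∑ i, cat (u i) • u i) - v ⬝ᵥ θs
      = ∑ i, a i * (cat (u i) - u i ⬝ᵥ θs) := by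
    have h1 : v ⬝ᵥ (∑ i, cat (u i) • u i) = ∑ i, a i * cat (u i) := by
      rw [dp_sum]
      refine Finset.sum_congr rfl fun i _ => ?_
      rw [dotProduct_smul]
      simp [ha, mul_comm]
    have h2 : v ⬝ᵥ θs = ∑ i, a i * (u i ⬝ᵥ θs) := by
      calc v ⬝ᵥ θs = (∑ i, a i • u i) ⬝ᵥ θs := by rw [← hv]
        _ = ∑ i, a i * (u i ⬝ᵥ θs) := by
            rw [sum_dp]
            refine Finset.sum_congr rfl fun i _ => ?_
            rw [smul_dotProduct]; rfl
    rw [h1, h2, ← Finset.sum_sub_distrib]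
    refine Finset.sum_congr rfl fun i _ => by ring
  -- quadratic forms
  have hvv : v ⬝ᵥ v = ∑ i, a i ^ 2 := by
    calc v ⬝ᵥ v = (∑ i, a i • u i) ⬝ᵥ v := by rw [← hv]
      _ = ∑ i, a i ^ 2 := by
          rw [sum_dp]
          refine Finset.sum_congr rfl fun i _ => ?_
          rw [smul_dotProduct, dotProduct_comm]
          simp [ha, sq, smul_eq_mul]
  have hquad : v ⬝ᵥ (Λ⁻¹ *ᵥ v) = ∑ i, a i ^ 2 * (μev i)⁻¹ := by
    have hmv : Λ⁻¹ *ᵥ v = ∑ i, (a i * (μev i)⁻¹) • u i := by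
      calc Λ⁻¹ *ᵥ v = Λ⁻¹ *ᵥ (∑ i, a i • u i) := by rw [← hv]
        _ = ∑ i, (a i * (μev i)⁻¹) • u i := by
            have : Λ⁻¹ *ᵥ (∑ i, a i • u i) = ∑ i, a i • (Λ⁻¹ *ᵥ u i) := by
              rw [← Matrix.mulVecLin_apply, map_sum]
              simp [Matrix.mulVecLin_apply, Matrix.mulVec_smul]
            rw [this]
            refine Finset.sum_congr rfl fun i _ => ?_
            rw [hinv i, smul_smul]
    rw [hmv, dp_sum]
    refine Finset.sum_congr rfl fun i _ => ?_
    rw [dotProduct_smul]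
    simp [ha, sq, smul_eq_mul]
    ring
  -- bound the sum
  have hstep : |∑ i, a i * (cat (u i) - u i ⬝ᵥ θs)|
      ≤ C1 * ∑ i, |a i| * Real.sqrt (μev i)⁻¹ + (∑ i, |a i|) * (C2 / T) := by
    calc |∑ i, a i * (cat (u i) - u i ⬝ᵥ θs)|
        ≤ ∑ i, |a i * (cat (u i) - u i ⬝ᵥ θs)| := Finset.abs_sum_le_sum_abs _ _
      _ ≤ ∑ i, |a i| * (C1 * Real.sqrt (μev i)⁻¹ + C2 / T) := by
          refine Finset.sum_le_sum fun i _ => ?_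
          rw [abs_mul]
          have := hcat i
          rw [hmu i] at this
          exact mul_le_mul_of_nonneg_left this (abs_nonneg _)
      _ = C1 * ∑ i, |a i| * Real.sqrt (μev i)⁻¹ + (∑ i, |a i|) * (C2 / T) := by
          rw [Finset.mul_sum, Finset.sum_mul, ← Finset.sum_add_distrib]
          refine Finset.sum_congr rfl fun i _ => by ring
  -- Cauchy-Schwarz bounds
  have hcs1 : ∑ i, |a i| * Real.sqrt (μev i)⁻¹ ≤ Real.sqrt d * mnorm Λ⁻¹ v := by
    have h := Real.sum_mul_le_sqrt_mul_sqrt Finset.univ (fun _ => (1:ℝ))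
      (fun i => |a i| * Real.sqrt (μev i)⁻¹)
    simp only [one_mul, one_pow, Finset.sum_const, Finset.card_univ, Fintype.card_fin,
      nsmul_eq_mul, mul_one] at h
    have heq : ∑ i, (|a i| * Real.sqrt (μev i)⁻¹) ^ 2 = ∑ i, a i ^ 2 * (μev i)⁻¹ := by
      refine Finset.sum_congr rfl fun i _ => ?_
      rw [mul_pow, sq_abs, Real.sq_sqrt (inv_nonneg.2 (hμ i).le)]
    rw [heq] at h
    unfold mnorm
    rwa [hquad]
  have hcs2 : ∑ i, |a i| ≤ Real.sqrt d * Real.sqrt (v ⬝ᵥ v) := by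
    have h := Real.sum_mul_le_sqrt_mul_sqrt Finset.univ (fun _ => (1:ℝ)) (fun i => |a i|)
    simp only [one_mul, one_pow, Finset.sum_const, Finset.card_univ, Fintype.card_fin,
      nsmul_eq_mul, mul_one, sq_abs] at h
    rwa [hvv]
  -- combine
  rw [hlhs]
  have hC2T : 0 ≤ C2 / T := div_nonneg hC2 hT.le
  calc |∑ i, a i * (cat (u i) - u i ⬝ᵥ θs)|
      ≤ C1 * ∑ i, |a i| * Real.sqrt (μev i)⁻¹ + (∑ i, |a i|) * (C2 / T) := hstep
    _ ≤ C1 * (Real.sqrt d * mnorm Λ⁻¹ v) + (Real.sqrt d * Real.sqrt (v ⬝ᵥ v)) * (C2 / T) := by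
        gcongr
    _ = Real.sqrt d * C1 * mnorm Λ⁻¹ v + Real.sqrt d * Real.sqrt (v ⬝ᵥ v) * C2 / T := by
        ring
end

section
/- Let X_1,...,X_T and X'_1,...,X'_T be reals with |X_t|, |X'_t| <= gamma, let alpha, alpha' > 0, and let z*, z*' be the (unique) roots of f(z) = sum_t psi(alpha*(X_t - z)) and f'(z) = sum_t psi(alpha'*(X'_t - z)) respectively, where psi is the Catoni influence function. Define eps := (1/T)*sum_t alpha*|X_t - X'_t| + 3*gamma*|alpha - alpha'|. If eps <= (1/18)*min{1, alpha^2*gamma^2}, then |z* - z*'| <= ((1 + 2*alpha*gamma)/alpha)*eps + sqrt(2*eps/alpha^2). -/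
/-- The Catoni influence function. -/
noncomputable def psiCatoni (y : ℝ) : ℝ :=
  if 0 ≤ y then Real.log (1 + y + y ^ 2) else - Real.log (1 - y + y ^ 2)

noncomputable def phiC (y : ℝ) : ℝ := Real.log (1 + y + y ^ 2)

lemma phiC_arg_pos (y : ℝ) : (0:ℝ) < 1 + y + y ^ 2 := by nlinarith [sq_nonneg (y+1), sq_nonneg y]

lemma psi_of_nonneg {y : ℝ} (hy : 0 ≤ y) : psiCatoni y = phiC y := if_pos hy

lemma phiC_zero : phiC 0 = 0 := by simp [phiC]

lemma psi_zero : psiCatoni 0 = 0 := by simp [psiCatoni]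

lemma psi_neg (y : ℝ) : psiCatoni (-y) = - psiCatoni y := by
  unfold psiCatoni
  rcases lt_trichotomy y 0 with h | h | h
  · rw [if_pos (by linarith), if_neg (not_le.mpr h)]
    ring_nf
  · simp [h]
  · rw [if_neg (by push_neg; linarith), if_pos h.le]
    ring_nf

lemma psi_pos {y : ℝ} (hy : 0 < y) : 0 < psiCatoni y := by
  rw [psi_of_nonneg hy.le, phiC]
  apply Real.log_pos
  nlinarith [sq_nonneg y]

lemma psi_neg_of_neg {y : ℝ} (hy : y < 0) : psiCatoni y < 0 := by
  have h := psi_pos (y := -y) (by linarith)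
  rw [psi_neg] at h
  linarith

lemma phiC_hasDeriv (y : ℝ) : HasDerivAt phiC ((1 + 2*y)/(1 + y + y^2)) y := by
  have h1 : HasDerivAt (fun x : ℝ => 1 + x + x ^ 2) (1 + 2*y) y := by
    have h := ((hasDerivAt_const y (1:ℝ)).add (hasDerivAt_id' y)).add (hasDerivAt_pow 2 y)
    exact h.congr_deriv (by norm_num)
  have h2 := (Real.hasDerivAt_log (phiC_arg_pos y).ne').comp y h1
  exact h2.congr_deriv (by ring)

lemma phiC_cont : Continuous phiC := by
  apply Continuous.log (by continuity) (fun x => (phiC_arg_pos x).ne')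

lemma phiC_lip {a b : ℝ} (ha : 0 ≤ a) (hab : a ≤ b) : phiC b - phiC a ≤ 7/6*(b-a) := by
  set g : ℝ → ℝ := fun x => 7/6*x - phiC x with hg
  have hd : ∀ x : ℝ, HasDerivAt g (7/6 - (1 + 2*x)/(1 + x + x^2)) x := by
    intro x
    have := ((hasDerivAt_id' x).const_mul (7/6 : ℝ)).sub (phiC_hasDeriv x)
    exact this.congr_deriv (by ring)
  have mono : MonotoneOn g (Set.Ici 0) := by
    apply monotoneOn_of_deriv_nonneg (convex_Ici 0)
    · exact ((continuous_const.mul continuous_id).sub phiC_cont).continuousOn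
    · intro x _
      exact (hd x).differentiableAt.differentiableWithinAt
    · intro x _
      rw [(hd x).deriv]
      rw [sub_nonneg, div_le_iff₀ (phiC_arg_pos x)]
      nlinarith [sq_nonneg (14*x - 5)]
  have := mono (Set.mem_Ici.mpr ha) (Set.mem_Ici.mpr (ha.trans hab)) hab
  simp only [hg] at this
  linarith

lemma phiC_slope {a b : ℝ} (ha : 0 ≤ a) (hab : a ≤ b) :
    2/(2+b)*(b-a) ≤ phiC b - phiC a := by
  have hb : 0 ≤ b := ha.trans hab
  have h2b : (0:ℝ) < 2 + b := by linarith
  set g : ℝ → ℝ := fun x => phiC x - 2/(2+b)*x with hg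
  have hd : ∀ x : ℝ, HasDerivAt g ((1 + 2*x)/(1 + x + x^2) - 2/(2+b)) x := by
    intro x
    have := (phiC_hasDeriv x).sub ((hasDerivAt_id' x).const_mul (2/(2+b) : ℝ))
    exact this.congr_deriv (by ring)
  have mono : MonotoneOn g (Set.Icc 0 b) := by
    apply monotoneOn_of_deriv_nonneg (convex_Icc 0 b)
    · exact (phiC_cont.sub (continuous_const.mul continuous_id)).continuousOn
    · intro x _
      exact (hd x).differentiableAt.differentiableWithinAt
    · intro x hx
      rw [interior_Icc] at hx
      rw [(hd x).deriv]
      rw [sub_nonneg, div_le_div_iff₀ h2b (phiC_arg_pos x)]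
      nlinarith [hx.1.le, hx.2.le, mul_nonneg hx.1.le (sub_nonneg.mpr hx.2.le)]
  have := mono (Set.mem_Icc.mpr ⟨le_refl 0, hb⟩) (Set.mem_Icc.mpr ⟨hb, le_refl b⟩) hb
  have h2 := mono (Set.mem_Icc.mpr ⟨ha, hab⟩) (Set.mem_Icc.mpr ⟨hb, le_refl b⟩) hab
  simp only [hg] at h2
  have h3 : 2/(2+b)*(b-a) = 2/(2+b)*b - 2/(2+b)*a := by ring
  linarith
lemma psi_lip {a b : ℝ} (hab : a ≤ b) : psiCatoni b - psiCatoni a ≤ 7/6*(b-a) := by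
  rcases le_or_gt 0 a with ha | ha
  · rw [psi_of_nonneg ha, psi_of_nonneg (ha.trans hab)]
    exact phiC_lip ha hab
  · rcases le_or_gt b 0 with hb | hb
    · have key := phiC_lip (a := -b) (b := -a) (by linarith) (by linarith)
      have e1 : psiCatoni b = - phiC (-b) := by
        rw [← psi_of_nonneg (by linarith : (0:ℝ) ≤ -b), psi_neg]; ring
      have e2 : psiCatoni a = - phiC (-a) := by
        rw [← psi_of_nonneg (by linarith : (0:ℝ) ≤ -a), psi_neg]; ring
      rw [e1, e2]; linarith
    · have k1 := phiC_lip (a := 0) (b := b) le_rfl hb.le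
      have k2 := phiC_lip (a := 0) (b := -a) le_rfl (by linarith)
      have e1 : psiCatoni b = phiC b := psi_of_nonneg hb.le
      have e2 : psiCatoni a = - phiC (-a) := by
        rw [← psi_of_nonneg (by linarith : (0:ℝ) ≤ -a), psi_neg]; ring
      rw [e1, e2, phiC_zero] at *
      linarith

lemma psi_slope {R a b : ℝ} (hRa : -R ≤ a) (hab : a ≤ b) (hbR : b ≤ R) :
    2/(2+R)*(b-a) ≤ psiCatoni b - psiCatoni a := by
  have hR : 0 ≤ R := by linarith
  have h2R : (0:ℝ) < 2 + R := by linarith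
  have base : ∀ c e : ℝ, 0 ≤ c → c ≤ e → e ≤ R → 2/(2+R)*(e-c) ≤ phiC e - phiC c := by
    intro c e hc hce heR
    have h1 := phiC_slope hc hce
    have h2 : 2/(2+R) ≤ 2/(2+e) := by
      apply div_le_div_of_nonneg_left (by norm_num) (by linarith) (by linarith)
    calc 2/(2+R)*(e-c) ≤ 2/(2+e)*(e-c) := by
          apply mul_le_mul_of_nonneg_right h2 (by linarith)
      _ ≤ phiC e - phiC c := h1
  rcases le_or_gt 0 a with ha | ha
  · rw [psi_of_nonneg ha, psi_of_nonneg (ha.trans hab)]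
    exact base a b ha hab hbR
  · rcases le_or_gt b 0 with hb | hb
    · have key := base (-b) (-a) (by linarith) (by linarith) (by linarith)
      have e1 : psiCatoni b = - phiC (-b) := by
        rw [← psi_of_nonneg (by linarith : (0:ℝ) ≤ -b), psi_neg]; ring
      have e2 : psiCatoni a = - phiC (-a) := by
        rw [← psi_of_nonneg (by linarith : (0:ℝ) ≤ -a), psi_neg]; ring
      rw [e1, e2]; linarith
    · have k1 := base 0 b le_rfl hb.le hbR
      have k2 := base 0 (-a) le_rfl (by linarith) (by linarith)
      have e1 : psiCatoni b = phiC b := psi_of_nonneg hb.le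
      have e2 : psiCatoni a = - phiC (-a) := by
        rw [← psi_of_nonneg (by linarith : (0:ℝ) ≤ -a), psi_neg]; ring
      rw [e1, e2, phiC_zero] at *
      linarith

lemma psi_mono {a b : ℝ} (hab : a ≤ b) : psiCatoni a ≤ psiCatoni b := by
  have h := psi_slope (R := |a| + |b|) (a := a) (b := b)
    (by cases abs_cases a <;> cases abs_cases b <;> linarith)
    hab (by cases abs_cases a <;> cases abs_cases b <;> linarith)
  have h2 : 0 ≤ 2/(2 + (|a| + |b|))*(b-a) := by
    apply mul_nonneg (by positivity) (by linarith)
  linarith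

lemma root_abs_le {T : ℕ} (hT : 0 < T) {Y : ℕ → ℝ} {γ β z : ℝ} (hβ : 0 < β)
    (hY : ∀ t ∈ Finset.range T, |Y t| ≤ γ)
    (hz : ∑ t ∈ Finset.range T, psiCatoni (β * (Y t - z)) = 0) : |z| ≤ γ := by
  by_contra h
  push_neg at h
  rcases lt_abs.mp h with h1 | h1
  · have hlt : ∀ t ∈ Finset.range T, psiCatoni (β * (Y t - z)) < (fun _ => (0:ℝ)) t := by
      intro t ht
      have := (abs_le.mp (hY t ht)).2
      exact psi_neg_of_neg (mul_neg_of_pos_of_neg hβ (by linarith))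
    have := Finset.sum_lt_sum_of_nonempty (Finset.nonempty_range_iff.mpr hT.ne') hlt
    simp only [Finset.sum_const_zero] at this
    linarith [hz ▸ this]
  · have hlt : ∀ t ∈ Finset.range T, (fun _ => (0:ℝ)) t < psiCatoni (β * (Y t - z)) := by
      intro t ht
      have := (abs_le.mp (hY t ht)).1
      exact psi_pos (mul_pos hβ (by linarith))
    have := Finset.sum_lt_sum_of_nonempty (Finset.nonempty_range_iff.mpr hT.ne') hlt
    simp only [Finset.sum_const_zero] at this
    linarith [hz ▸ this]
lemma habs_tri (p q : ℝ) : |p - q| ≤ |p| + |q| := by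
  rw [sub_eq_add_neg]
  exact (abs_add_le p (-q)).trans_eq (by rw [abs_neg])

lemma scalar_md {A eps s : ℝ} (hA : 0 ≤ A) (heps0 : 0 ≤ eps) (heps1 : eps ≤ 1/18)
    (hs_ge : 6*eps ≤ s) (hs0 : 0 ≤ s) :
    7/6*eps*(2 + (2*A + ((1 + 2*A)*eps + s))) ≤ 2*((1 + 2*A)*eps + s) := by
  nlinarith [mul_le_mul_of_nonneg_left heps1 (mul_nonneg hA heps0),
             mul_le_mul_of_nonneg_left heps1 heps0,
             mul_le_mul_of_nonneg_left heps1 hs0,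
             mul_nonneg hA heps0]

lemma sq_le_of_le_one {A : ℝ} (hA : 0 ≤ A) (h : A ≤ 1) : A^2 ≤ A := by nlinarith

set_option maxHeartbeats 1000000 in
lemma main_aux (T : ℕ) (hT : 0 < T) (X X' : ℕ → ℝ) (γ α α' : ℝ)
    (hα : 0 < α) (hα' : 0 < α')
    (hX : ∀ t ∈ Finset.range T, |X t| ≤ γ)
    (hX' : ∀ t ∈ Finset.range T, |X' t| ≤ γ)
    (z z' : ℝ)
    (hz : ∑ t ∈ Finset.range T, psiCatoni (α * (X t - z)) = 0)
    (hz' : ∑ t ∈ Finset.range T, psiCatoni (α' * (X' t - z')) = 0)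
    (eps : ℝ)
    (heps : eps = (1 / T) * (∑ t ∈ Finset.range T, α * |X t - X' t|) + 3 * γ * |α - α'|)
    (hsmall : eps ≤ (1 / 18) * min 1 (α ^ 2 * γ ^ 2)) :
    z' - z ≤ (1 + 2 * α * γ) / α * eps + Real.sqrt (2 * eps) / α := by
  have hTpos : (0:ℝ) < T := Nat.cast_pos.mpr hT
  have hγ : 0 ≤ γ := le_trans (abs_nonneg _) (hX 0 (Finset.mem_range.mpr hT))
  have hA : 0 ≤ α * γ := mul_nonneg hα.le hγ
  have heps0 : 0 ≤ eps := by
    rw [heps]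
    have h1 : 0 ≤ ∑ t ∈ Finset.range T, α * |X t - X' t| :=
      Finset.sum_nonneg fun t _ => mul_nonneg hα.le (abs_nonneg _)
    have h2 : 0 ≤ 3 * γ * |α - α'| := mul_nonneg (by linarith only [hγ]) (abs_nonneg _)
    have h3 : 0 ≤ (1 : ℝ) / T := by positivity
    exact add_nonneg (mul_nonneg h3 h1) h2
  have heps1 : eps ≤ 1/18 := by
    linarith only [hsmall, min_le_left 1 (α^2*γ^2)]
  have hepsq : eps ≤ (α*γ)^2/18 := by
    have h := min_le_right 1 (α^2*γ^2)
    have h2 : (α*γ)^2 = α^2*γ^2 := by ring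
    linarith only [hsmall, h, h2]
  have hepsA : eps ≤ (α*γ)/18 := by
    rcases le_or_gt (α*γ) 1 with h | h
    · have h2 := sq_le_of_le_one hA h
      have h3 : (α*γ)^2 = α^2*γ^2 := by ring
      linarith only [hsmall, min_le_right 1 (α^2*γ^2), h2, h3]
    · linarith only [hsmall, min_le_left 1 (α^2*γ^2), h]
  set s := Real.sqrt (2*eps) with hsdef
  have hs0 : 0 ≤ s := Real.sqrt_nonneg _
  have hs_ge : 6*eps ≤ s := by
    rw [hsdef]
    calc 6*eps = Real.sqrt ((6*eps)^2) := (Real.sqrt_sq (by linarith only [heps0])).symm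
      _ ≤ Real.sqrt (2*eps) := Real.sqrt_le_sqrt (by nlinarith [heps0, heps1])
  have hs_leA : s ≤ α*γ/3 := by
    rw [hsdef]
    calc Real.sqrt (2*eps) ≤ Real.sqrt ((α*γ/3)^2) := Real.sqrt_le_sqrt (by nlinarith [hepsq])
      _ = α*γ/3 := Real.sqrt_sq (by positivity)
  have hs_le3 : s ≤ 1/3 := by
    rw [hsdef]
    calc Real.sqrt (2*eps) ≤ Real.sqrt ((1/3:ℝ)^2) := Real.sqrt_le_sqrt (by nlinarith [heps1])
      _ = 1/3 := Real.sqrt_sq (by norm_num)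
  set d := (1 + 2*(α*γ))*eps + s with hddef
  have hde : d = (1 + 2*(α*γ))*eps + s := hddef
  have hd0 : 0 ≤ d := by
    have h1 : 0 ≤ (1 + 2*(α*γ))*eps := mul_nonneg (by linarith only [hA]) heps0
    linarith only [h1, hs0, hde]
  have hdA : d ≤ α*γ := by
    have h2 : 2*(α*γ)*eps ≤ 2*(α*γ)*(1/18) :=
      mul_le_mul_of_nonneg_left heps1 (by linarith only [hA])
    linarith only [hde, hepsA, hs_leA, h2, hA]
  have hΔγ : d/α ≤ γ := by
    rw [div_le_iff₀ hα]; linarith only [hdA]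
  have hΔ0 : 0 ≤ d/α := div_nonneg hd0 hα.le
  set w := z + d/α with hwdef
  have hzabs : |z| ≤ γ := root_abs_le hT hα hX hz
  have hz'abs : |z'| ≤ γ := root_abs_le hT hα' hX' hz'
  set R := 2*(α*γ) + d with hRdef
  have hRe : R = 2*(α*γ) + d := hRdef
  clear_value s d w R
  have hR0 : 0 ≤ R := by linarith only [hRe, hA, hd0]
  have h2R : (0:ℝ) < 2 + R := by linarith only [hR0]
  have hm1 : 2/(2+R) ≤ 1 := by
    rw [div_le_one h2R]; linarith only [hR0]
  have hm0 : 0 ≤ 2/(2+R) := div_nonneg (by norm_num) h2R.le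
  have hmd : 7/6*eps ≤ 2/(2+R)*d := by
    rw [show 2/(2+R)*d = 2*d/(2+R) by ring, le_div_iff₀ h2R, hRe, hde]
    exact scalar_md hA heps0 heps1 hs_ge hs0
  have hTne : (T:ℝ) ≠ 0 := hTpos.ne'
  have hsum_eps : ∑ t ∈ Finset.range T, (α * |X t - X' t| + 3*γ*|α - α'|) = T*eps := by
    rw [Finset.sum_add_distrib, Finset.sum_const, Finset.card_range, nsmul_eq_mul, heps]
    field_simp
  have key : ∀ t ∈ Finset.range T,
      2/(2+R)*d - 7/6*(α * |X t - X' t| + 3*γ*|α - α'|)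
        ≤ psiCatoni (α * (X t - z)) - psiCatoni (α' * (X' t - w)) := by
    intro t ht
    have hXa := hX t ht
    have hX'a := hX' t ht
    set u := α * (X t - z) with hu
    set b := α' * (X' t - w) with hb
    set et := b - α * (X t - w) with het
    have h1 : |X t - z| ≤ 2*γ := by
      linarith only [habs_tri (X t) z, hXa, hzabs]
    have hu_abs : |u| ≤ 2*(α*γ) := by
      rw [hu, abs_mul, abs_of_pos hα]
      have := mul_le_mul_of_nonneg_left h1 hα.le
      linarith only [this]
    have huB := abs_le.mp hu_abs
    have hub : u - b = d - et := by
      simp only [hu, het, hwdef]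
      field_simp
      ring
    have het_abs : |et| ≤ α * |X t - X' t| + 3*γ*|α - α'| := by
      have hwz : |X' t - w| ≤ 3*γ := by
        simp only [hwdef]
        have h2 := habs_tri (X' t) (z + d/α)
        have h3 : |z + d/α| ≤ |z| + d/α := by
          have h4 := abs_add_le z (d/α)
          rw [abs_of_nonneg hΔ0] at h4
          linarith only [h4]
        linarith only [h2, h3, hX'a, hzabs, hΔγ]
      have hform : et = α*(X' t - X t) + (α' - α)*(X' t - w) := by
        simp only [het, hb]; ring
      calc |et| ≤ |α*(X' t - X t)| + |(α'-α)*(X' t - w)| := by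
            rw [hform]; exact abs_add_le _ _
        _ = α * |X' t - X t| + |α' - α| * |X' t - w| := by
            rw [abs_mul, abs_mul, abs_of_pos hα]
        _ ≤ α * |X t - X' t| + |α - α'| * (3*γ) := by
            rw [abs_sub_comm (X' t) (X t), abs_sub_comm α' α]
            exact add_le_add le_rfl (mul_le_mul_of_nonneg_left hwz (abs_nonneg _))
        _ = α * |X t - X' t| + 3*γ*|α - α'| := by ring
    clear_value u b et
    have het_le : et ≤ α * |X t - X' t| + 3*γ*|α - α'| := (le_abs_self et).trans het_abs
    have hεt0 : 0 ≤ α * |X t - X' t| + 3*γ*|α - α'| :=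
      add_nonneg (mul_nonneg hα.le (abs_nonneg _)) (mul_nonneg (by linarith only [hγ]) (abs_nonneg _))
    rcases le_or_gt et 0 with hcase | hcase
    · have hble : b ≤ u - d := by linarith only [hub, hcase]
      have h2 : psiCatoni b ≤ psiCatoni (u - d) := psi_mono hble
      have h3 : 2/(2+R)*d ≤ psiCatoni u - psiCatoni (u - d) := by
        have h := psi_slope (R := R) (a := u - d) (b := u)
          (by linarith only [huB.1, hRe, hd0]) (by linarith only [hd0])
          (by linarith only [huB.2, hRe, hd0])
        have he : u - (u - d) = d := by ring
        rw [he] at h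
        exact h
      have h4 : 0 ≤ 7/6*(α * |X t - X' t| + 3*γ*|α - α'|) := by linarith only [hεt0]
      linarith only [h2, h3, h4]
    · rcases le_or_gt et d with hcase2 | hcase2
      · have h3 : 2/(2+R)*(d - et) ≤ psiCatoni u - psiCatoni (u - (d - et)) := by
          have h := psi_slope (R := R) (a := u - (d - et)) (b := u)
            (by linarith only [huB.1, hRe, hcase]) (by linarith only [hcase2])
            (by linarith only [huB.2, hRe, hd0])
          have he : u - (u - (d - et)) = d - et := by ring
          rw [he] at h
          exact h
        have h4 : u - (d - et) = b := by linarith only [hub]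
        rw [h4] at h3
        have h5 : 2/(2+R)*et ≤ et := by
          have := mul_le_mul_of_nonneg_right hm1 hcase.le
          linarith only [this]
        have hexp : 2/(2+R)*d = 2/(2+R)*(d-et) + 2/(2+R)*et := by ring
        linarith only [h3, h5, hexp, het_le, hεt0]
      · have h1b : u ≤ b := by linarith only [hub, hcase2]
        have h2 : psiCatoni b - psiCatoni u ≤ 7/6*(b - u) := psi_lip h1b
        have h3 : b - u = et - d := by linarith only [hub]
        have h6 : 0 ≤ (7/6 - 2/(2+R))*d := mul_nonneg (by linarith only [hm1]) hd0
        have h7 : (7/6 - 2/(2+R))*d = 7/6*d - 2/(2+R)*d := by ring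
        linarith only [h2, h3, het_le, h6, h7]
  have hsum := Finset.sum_le_sum key
  rw [Finset.sum_sub_distrib, Finset.sum_sub_distrib, hz, Finset.sum_const,
    Finset.card_range, nsmul_eq_mul, ← Finset.mul_sum, hsum_eps] at hsum
  have hb_sum : ∑ t ∈ Finset.range T, psiCatoni (α' * (X' t - w)) ≤ 0 := by
    have hTmd : 0 ≤ (T:ℝ)*(2/(2+R)*d) - 7/6*((T:ℝ)*eps) := by
      have h := mul_le_mul_of_nonneg_left hmd hTpos.le
      linarith only [h]
    linarith only [hsum, hTmd]
  have hfinal : z' ≤ w := by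
    by_contra hcon
    push_neg at hcon
    set R' := α'*(3*γ) with hR'def
    have hR'e : R' = α'*(3*γ) := hR'def
    clear_value R'
    have hR'0 : 0 ≤ R' := by
      have := mul_nonneg hα'.le hγ
      linarith only [hR'e, this]
    have h2R' : (0:ℝ) < 2 + R' := by linarith only [hR'0]
    have hwz : z ≤ w := by
      simp only [hwdef]; linarith only [hΔ0]
    have hstep : ∀ t ∈ Finset.range T,
        psiCatoni (α' * (X' t - z')) + 2/(2+R')*(α'*(z' - w)) ≤ psiCatoni (α' * (X' t - w)) := by
      intro t ht
      have hX'a := abs_le.mp (hX' t ht)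
      have hz'le := abs_le.mp hz'abs
      have hzle := abs_le.mp hzabs
      have ha1 : -(2*γ) ≤ X' t - z' := by linarith only [hX'a.1, hz'le.2]
      have ha2 : X' t - z' ≤ X' t - w := by linarith only [hcon]
      have ha3 : X' t - w ≤ 3*γ := by linarith only [hX'a.2, hzle.1, hwz, hγ]
      have hm1 := mul_le_mul_of_nonneg_left ha1 hα'.le
      have hm2 := mul_le_mul_of_nonneg_left ha2 hα'.le
      have hm3 := mul_le_mul_of_nonneg_left ha3 hα'.le
      have hαγ' : 0 ≤ α'*γ := mul_nonneg hα'.le hγ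
      have h := psi_slope (R := R') (a := α' * (X' t - z')) (b := α' * (X' t - w))
        (by linarith only [hm1, hR'e, hαγ']) hm2 (by linarith only [hm3, hR'e])
      have he : α' * (X' t - w) - α' * (X' t - z') = α'*(z' - w) := by ring
      rw [he] at h
      linarith only [h]
    have hsum2 := Finset.sum_le_sum hstep
    rw [Finset.sum_add_distrib, hz', Finset.sum_const, Finset.card_range, nsmul_eq_mul] at hsum2
    have hpos : 0 < (T:ℝ)*(2/(2+R')*(α'*(z' - w))) := by
      apply mul_pos hTpos
      apply mul_pos (div_pos (by norm_num) h2R')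
      exact mul_pos hα' (by linarith only [hcon])
    linarith only [hsum2, hb_sum, hpos]
  have hdeq : d/α = (1 + 2*α*γ)/α*eps + s/α := by
    rw [hde]; ring
  simp only [hwdef] at hfinal
  have hgoal : z' ≤ z + ((1 + 2*α*γ)/α*eps + s/α) := by
    rw [← hdeq]; exact hfinal
  linarith only [hgoal]
/-- perturbation bound for the root of the Catoni objective. -/
theorem stmt17 (T : ℕ) (hT : 0 < T) (X X' : ℕ → ℝ) (γ α α' : ℝ)
    (hα : 0 < α) (hα' : 0 < α')
    (hX : ∀ t ∈ Finset.range T, |X t| ≤ γ)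
    (hX' : ∀ t ∈ Finset.range T, |X' t| ≤ γ)
    (z z' : ℝ)
    (hz : ∑ t ∈ Finset.range T, psiCatoni (α * (X t - z)) = 0)
    (hz' : ∑ t ∈ Finset.range T, psiCatoni (α' * (X' t - z')) = 0)
    (eps : ℝ)
    (heps : eps = (1 / T) * (∑ t ∈ Finset.range T, α * |X t - X' t|) + 3 * γ * |α - α'|)
    (hsmall : eps ≤ (1 / 18) * min 1 (α ^ 2 * γ ^ 2)) :
    |z - z'| ≤ ((1 + 2 * α * γ) / α) * eps + Real.sqrt (2 * eps / α ^ 2) := by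
  have heps0 : 0 ≤ eps := by
    rw [heps]
    have hγ : 0 ≤ γ := le_trans (abs_nonneg _) (hX 0 (Finset.mem_range.mpr hT))
    have h1 : 0 ≤ ∑ t ∈ Finset.range T, α * |X t - X' t| :=
      Finset.sum_nonneg fun t _ => mul_nonneg hα.le (abs_nonneg _)
    have h2 : 0 ≤ 3 * γ * |α - α'| := mul_nonneg (by linarith only [hγ]) (abs_nonneg _)
    have h3 : 0 ≤ (1 : ℝ) / T := by positivity
    exact add_nonneg (mul_nonneg h3 h1) h2
  have hsqrt : Real.sqrt (2 * eps / α ^ 2) = Real.sqrt (2 * eps) / α := by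
    rw [show 2 * eps / α ^ 2 = 2 * eps * (α⁻¹)^2 by field_simp,
      Real.sqrt_mul (by linarith only [heps0]), Real.sqrt_sq (by positivity), div_eq_mul_inv]
  rw [hsqrt]
  have h1 : z' - z ≤ (1 + 2 * α * γ) / α * eps + Real.sqrt (2 * eps) / α :=
    main_aux T hT X X' γ α α' hα hα' hX hX' z z' hz hz' eps heps hsmall
  have h2 : z - z' ≤ (1 + 2 * α * γ) / α * eps + Real.sqrt (2 * eps) / α := by
    have hzn : ∑ t ∈ Finset.range T, psiCatoni (α * ((fun t => -X t) t - (-z))) = 0 := by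
      have : ∀ t ∈ Finset.range T,
          psiCatoni (α * ((fun t => -X t) t - (-z))) = - psiCatoni (α * (X t - z)) := by
        intro t _
        rw [show α * ((fun t => -X t) t - (-z)) = -(α * (X t - z)) by simp; ring, psi_neg]
      rw [Finset.sum_congr rfl this, Finset.sum_neg_distrib, hz, neg_zero]
    have hzn' : ∑ t ∈ Finset.range T, psiCatoni (α' * ((fun t => -X' t) t - (-z'))) = 0 := by
      have : ∀ t ∈ Finset.range T,
          psiCatoni (α' * ((fun t => -X' t) t - (-z'))) = - psiCatoni (α' * (X' t - z')) := by
        intro t _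
        rw [show α' * ((fun t => -X' t) t - (-z')) = -(α' * (X' t - z')) by simp; ring, psi_neg]
      rw [Finset.sum_congr rfl this, Finset.sum_neg_distrib, hz', neg_zero]
    have hXn : ∀ t ∈ Finset.range T, |(fun t => -X t) t| ≤ γ := by
      intro t ht; simpa using hX t ht
    have hXn' : ∀ t ∈ Finset.range T, |(fun t => -X' t) t| ≤ γ := by
      intro t ht; simpa using hX' t ht
    have hepsn : eps = (1 / T) *
        (∑ t ∈ Finset.range T, α * |(fun t => -X t) t - (fun t => -X' t) t|) + 3 * γ * |α - α'| := by
      rw [heps]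
      congr 1
      congr 1
      apply Finset.sum_congr rfl
      intro t _
      rw [show (fun t => -X t) t - (fun t => -X' t) t = -(X t - X' t) by simp; ring, abs_neg]
    have := main_aux T hT (fun t => -X t) (fun t => -X' t) γ α α' hα hα' hXn hXn'
      (-z) (-z') hzn hzn' eps hepsn hsmall
    linarith only [this]
  rw [abs_sub_le_iff]
  exact ⟨h2, h1⟩
end

section
/- Let (F_t) be a filtration and X_1,...,X_T real random variables with X_t F_t-measurable, E[X_t | F_{t-1}] = 0, |X_t| <= b almost surely, and sum_{t=1}^T E[X_t^2 | F_{t-1}] <= V almost surely for fixed constants b, V > 0. Then for any delta in (0,1), with probability at least 1 - delta, sum_{t=1}^T X_t <= 2*sqrt(V*log(1/delta)) + b*log(1/delta). -/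
open MeasureTheory Finset

lemma exp_le_one_add_add_sq {x : ℝ} (hx : |x| ≤ 1) : Real.exp x ≤ 1 + x + x ^ 2 := by
  have h := Real.exp_bound hx (n := 2) (by norm_num)
  have h2 : (∑ m ∈ Finset.range 2, x ^ m / m.factorial) = 1 + x := by
    simp [Finset.sum_range_succ]
  rw [h2] at h
  have h3 := (abs_le.mp h).2
  rw [sq_abs] at h3
  norm_num at h3
  nlinarith [sq_nonneg x]

theorem freedman_aux {Ω : Type*} {mΩ : MeasurableSpace Ω} (μ : Measure Ω)
    [IsProbabilityMeasure μ] (𝔉 : Filtration ℕ mΩ)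
    (X : ℕ → Ω → ℝ) (b l : ℝ) (hl : 0 ≤ l) (hlb : l * b ≤ 1)
    (hadapt : ∀ t, StronglyMeasurable[𝔉 t] (X t))
    (hint : ∀ t, Integrable (X t) μ)
    (hint2 : ∀ t, Integrable (fun ω => (X t ω) ^ 2) μ)
    (hmean : ∀ t, 1 ≤ t → μ[X t | 𝔉 (t - 1)] =ᵐ[μ] 0)
    (hbdd : ∀ t, ∀ᵐ ω ∂μ, |X t ω| ≤ b) (n : ℕ) :
    Integrable (fun ω => Real.exp (l * ∑ t ∈ Finset.Icc 1 n, X t ω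
      - l ^ 2 * ∑ t ∈ Finset.Icc 1 n, (μ[fun ω' => (X t ω') ^ 2 | 𝔉 (t - 1)]) ω)) μ ∧
    ∫ ω, Real.exp (l * ∑ t ∈ Finset.Icc 1 n, X t ω
      - l ^ 2 * ∑ t ∈ Finset.Icc 1 n, (μ[fun ω' => (X t ω') ^ 2 | 𝔉 (t - 1)]) ω) ∂μ ≤ 1 := by
  -- notation
  set v : ℕ → Ω → ℝ := fun t => μ[fun ω' => (X t ω') ^ 2 | 𝔉 (t - 1)] with hv_def
  have hv_sm : ∀ t, StronglyMeasurable[𝔉 (t - 1)] (v t) := fun t => stronglyMeasurable_condExp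
  have hv_int : ∀ t, Integrable (v t) μ := fun t => integrable_condExp
  have hv_nonneg : ∀ t, 0 ≤ᵐ[μ] v t := fun t =>
    condExp_nonneg (Filter.Eventually.of_forall fun ω => sq_nonneg _)
  -- the a.e. good set
  have hae : ∀ᵐ ω ∂μ, ∀ t, |X t ω| ≤ b ∧ 0 ≤ v t ω := by
    rw [MeasureTheory.ae_all_iff]
    exact fun t => (hbdd t).and (hv_nonneg t)
  -- M n bounded by exp (l * n * b) a.e.
  set M : ℕ → Ω → ℝ := fun n ω => Real.exp (l * ∑ t ∈ Finset.Icc 1 n, X t ω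
      - l ^ 2 * ∑ t ∈ Finset.Icc 1 n, v t ω) with hM_def
  have hM_bdd : ∀ m, ∀ᵐ ω ∂μ, M m ω ≤ Real.exp (l * (m * b)) := by
    intro m
    filter_upwards [hae] with ω hω
    have hS : ∑ t ∈ Finset.Icc 1 m, X t ω ≤ m * b := by
      calc ∑ t ∈ Finset.Icc 1 m, X t ω ≤ ∑ t ∈ Finset.Icc 1 m, b :=
            Finset.sum_le_sum fun t _ => (abs_le.mp (hω t).1).2
        _ = m * b := by simp [Nat.card_Icc]
    have hW : (0:ℝ) ≤ ∑ t ∈ Finset.Icc 1 m, v t ω :=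
      Finset.sum_nonneg fun t _ => (hω t).2
    apply Real.exp_le_exp.mpr
    nlinarith [mul_le_mul_of_nonneg_left hS hl, mul_nonneg (sq_nonneg l) hW]
  have hX_sm : ∀ t, StronglyMeasurable (X t) := fun t => (hadapt t).mono (𝔉.le t)
  have hM_sm : ∀ m, StronglyMeasurable (M m) := by
    intro m
    apply (Real.continuous_exp.comp_stronglyMeasurable)
    apply StronglyMeasurable.sub
    · exact (stronglyMeasurable_const.mul
        (Finset.stronglyMeasurable_fun_sum _ fun t _ => hX_sm t))
    · exact (stronglyMeasurable_const.mul
        (Finset.stronglyMeasurable_fun_sum _ fun t _ => (hv_sm t).mono (𝔉.le _)))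
  have hM_int : ∀ m, Integrable (M m) μ := by
    intro m
    refine Integrable.mono' (integrable_const (Real.exp (l * (m * b))))
      (hM_sm m).aestronglyMeasurable ?_
    filter_upwards [hM_bdd m] with ω hω
    rwa [Real.norm_eq_abs, abs_of_pos (Real.exp_pos _)]
  -- induction
  suffices h : ∀ m, ∫ ω, M m ω ∂μ ≤ 1 by exact ⟨hM_int n, h n⟩
  intro m
  induction m with
  | zero => simp [hM_def]
  | succ n ih =>
    -- split the sums
    have hsum : ∀ (f : ℕ → ℝ), ∑ t ∈ Finset.Icc 1 (n + 1), f t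
        = (∑ t ∈ Finset.Icc 1 n, f t) + f (n + 1) := fun f =>
      Finset.sum_Icc_succ_top (Nat.le_add_left 1 n) f
    set G : Ω → ℝ := fun ω => Real.exp (l * ∑ t ∈ Finset.Icc 1 n, X t ω
        - l ^ 2 * ∑ t ∈ Finset.Icc 1 n, v t ω - l ^ 2 * v (n + 1) ω) with hG_def
    set Z : Ω → ℝ := fun ω => Real.exp (l * X (n + 1) ω) with hZ_def
    have hMGZ : M (n + 1) = fun ω => G ω * Z ω := by
      funext ω
      simp only [hM_def, hG_def, hZ_def, ← Real.exp_add, hsum]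
      ring_nf
    -- strong measurability of G wrt 𝔉 n
    have hG_sm : StronglyMeasurable[𝔉 n] G := by
      apply Real.continuous_exp.comp_stronglyMeasurable
      apply StronglyMeasurable.sub
      apply StronglyMeasurable.sub
      · refine stronglyMeasurable_const.mul (Finset.stronglyMeasurable_fun_sum _ fun t ht => ?_)
        exact (hadapt t).mono (𝔉.mono (Finset.mem_Icc.mp ht).2)
      · refine stronglyMeasurable_const.mul (Finset.stronglyMeasurable_fun_sum _ fun t ht => ?_)
        exact (hv_sm t).mono (𝔉.mono (by have := (Finset.mem_Icc.mp ht).2; omega))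
      · exact stronglyMeasurable_const.mul ((hv_sm (n + 1)).mono (by simp))
    have hG_nonneg : ∀ ω, 0 ≤ G ω := fun ω => (Real.exp_pos _).le
    have hG_bdd : ∀ᵐ ω ∂μ, ‖G ω‖ ≤ Real.exp (l * (n * b)) := by
      filter_upwards [hM_bdd n, hae] with ω h1 h2
      rw [Real.norm_eq_abs, abs_of_pos (Real.exp_pos _)]
      refine le_trans ?_ h1
      simp only [hM_def, hG_def]
      apply Real.exp_le_exp.mpr
      have := mul_nonneg (sq_nonneg l) (h2 (n + 1)).2
      linarith
    have hZ_int : Integrable Z μ := by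
      refine Integrable.mono' (integrable_const (Real.exp 1))
        ((Real.continuous_exp.comp_stronglyMeasurable
          (stronglyMeasurable_const.mul (hX_sm (n + 1)))).aestronglyMeasurable) ?_
      filter_upwards [hbdd (n + 1)] with ω hω
      rw [Real.norm_eq_abs, abs_of_pos (Real.exp_pos _)]
      apply Real.exp_le_exp.mpr
      calc l * X (n + 1) ω ≤ l * |X (n + 1) ω| := by
            have := le_abs_self (X (n + 1) ω); nlinarith
        _ ≤ l * b := by nlinarith [abs_nonneg (X (n+1) ω)]
        _ ≤ 1 := hlb
    have hGZ_int : Integrable (fun ω => G ω * Z ω) μ := by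
      rw [← hMGZ]; exact hM_int (n + 1)
    -- pull-out
    have hpull : μ[(fun ω => G ω * Z ω) | 𝔉 n] =ᵐ[μ] fun ω => G ω * (μ[Z | 𝔉 n]) ω :=
      condExp_mul_of_stronglyMeasurable_left hG_sm hGZ_int hZ_int
    -- conditional bound on Z
    have hcondv : μ[(fun ω => (X (n + 1) ω) ^ 2) | 𝔉 n] = v (n + 1) := by
      simp [hv_def]
    have hXc : μ[X (n + 1) | 𝔉 n] =ᵐ[μ] 0 := by
      have := hmean (n + 1) (by omega)
      simpa using this
    have hZbd : Z ≤ᵐ[μ] fun ω => 1 + l * X (n + 1) ω + l ^ 2 * (X (n + 1) ω) ^ 2 := by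
      filter_upwards [hbdd (n + 1)] with ω hω
      have habs : |l * X (n + 1) ω| ≤ 1 := by
        rw [abs_mul, abs_of_nonneg hl]
        calc l * |X (n + 1) ω| ≤ l * b := by nlinarith
          _ ≤ 1 := hlb
      have := exp_le_one_add_add_sq habs
      calc Z ω ≤ 1 + l * X (n + 1) ω + (l * X (n + 1) ω) ^ 2 := this
        _ = 1 + l * X (n + 1) ω + l ^ 2 * (X (n + 1) ω) ^ 2 := by ring
    have hRHS_int : Integrable (fun ω => 1 + l * X (n + 1) ω + l ^ 2 * (X (n + 1) ω) ^ 2) μ := by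
      exact ((integrable_const 1).add ((hint (n + 1)).const_mul l)).add
        ((hint2 (n + 1)).const_mul (l ^ 2))
    have hcond : μ[Z | 𝔉 n] ≤ᵐ[μ] fun ω => 1 + l ^ 2 * v (n + 1) ω := by
      refine (condExp_mono hZ_int hRHS_int hZbd).trans (Filter.EventuallyEq.le ?_)
      have e1 : (fun ω => 1 + l * X (n + 1) ω + l ^ 2 * (X (n + 1) ω) ^ 2)
          = (fun _ => (1:ℝ)) + (l • X (n + 1)) + (l ^ 2 • fun ω => (X (n + 1) ω) ^ 2) := by
        funext ω; simp [smul_eq_mul]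
      rw [e1]
      calc μ[(fun _ => (1:ℝ)) + (l • X (n + 1)) + (l ^ 2 • fun ω => (X (n + 1) ω) ^ 2) | 𝔉 n]
          =ᵐ[μ] μ[(fun _ => (1:ℝ)) + (l • X (n + 1)) | 𝔉 n]
              + μ[(l ^ 2 • fun ω => (X (n + 1) ω) ^ 2) | 𝔉 n] :=
            condExp_add ((integrable_const 1).add ((hint (n + 1)).smul l))
              ((hint2 (n + 1)).smul (l ^ 2)) _
        _ =ᵐ[μ] (μ[(fun _ => (1:ℝ)) | 𝔉 n] + μ[(l • X (n + 1)) | 𝔉 n])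
              + μ[(l ^ 2 • fun ω => (X (n + 1) ω) ^ 2) | 𝔉 n] := by
            exact (condExp_add (integrable_const 1) ((hint (n + 1)).smul l) _).add
              (Filter.EventuallyEq.refl _ _)
        _ =ᵐ[μ] fun ω => 1 + l ^ 2 * v (n + 1) ω := by
            have h1 : μ[(fun _ => (1:ℝ)) | 𝔉 n] = fun _ => (1:ℝ) := condExp_const (𝔉.le n) 1
            have h2 : μ[(l • X (n + 1)) | 𝔉 n] =ᵐ[μ] l • μ[X (n + 1) | 𝔉 n] :=
              condExp_smul l (X (n + 1)) _
            have h3 : μ[(l ^ 2 • fun ω => (X (n + 1) ω) ^ 2) | 𝔉 n]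
                =ᵐ[μ] l ^ 2 • μ[(fun ω => (X (n + 1) ω) ^ 2) | 𝔉 n] :=
              condExp_smul (l ^ 2) _ _
            filter_upwards [h2, h3, hXc] with ω e2 e3 e4
            simp only [Pi.add_apply, h1, e2, e3, Pi.smul_apply, smul_eq_mul, hcondv]
            rw [e4]
            simp
    -- now the integral computation
    have step1 : ∫ ω, M (n + 1) ω ∂μ = ∫ ω, G ω * (μ[Z | 𝔉 n]) ω ∂μ := by
      rw [hMGZ]
      exact (integral_condExp (𝔉.le n)).symm.trans (integral_congr_ae hpull)
    have hGmul_int : Integrable (fun ω => G ω * (μ[Z | 𝔉 n]) ω) μ :=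
      (integrable_condExp).congr hpull
    have hGv_int : Integrable (fun ω => G ω * (1 + l ^ 2 * v (n + 1) ω)) μ := by
      refine Integrable.bdd_mul (c := Real.exp (l * (n * b))) ?_ ((hG_sm.mono (𝔉.le n)).aestronglyMeasurable) ?_
      · exact (integrable_const 1).add ((hv_int (n + 1)).const_mul (l ^ 2))
      · exact hG_bdd
    have step2 : ∫ ω, G ω * (μ[Z | 𝔉 n]) ω ∂μ ≤ ∫ ω, G ω * (1 + l ^ 2 * v (n + 1) ω) ∂μ := by
      refine integral_mono_ae hGmul_int hGv_int ?_
      filter_upwards [hcond] with ω hω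
      exact mul_le_mul_of_nonneg_left hω (hG_nonneg ω)
    have step3 : ∫ ω, G ω * (1 + l ^ 2 * v (n + 1) ω) ∂μ ≤ ∫ ω, M n ω ∂μ := by
      refine integral_mono hGv_int (hM_int n) fun ω => ?_
      have h1 : 1 + l ^ 2 * v (n + 1) ω ≤ Real.exp (l ^ 2 * v (n + 1) ω) := by
        linarith [Real.add_one_le_exp (l ^ 2 * v (n + 1) ω)]
      calc G ω * (1 + l ^ 2 * v (n + 1) ω) ≤ G ω * Real.exp (l ^ 2 * v (n + 1) ω) :=
            mul_le_mul_of_nonneg_left h1 (hG_nonneg ω)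
        _ = M n ω := by
            simp only [hG_def, hM_def, ← Real.exp_add]; ring_nf
    calc ∫ ω, M (n + 1) ω ∂μ = ∫ ω, G ω * (μ[Z | 𝔉 n]) ω ∂μ := step1
      _ ≤ ∫ ω, G ω * (1 + l ^ 2 * v (n + 1) ω) ∂μ := step2
      _ ≤ ∫ ω, M n ω ∂μ := step3
      _ ≤ 1 := ih

open MeasureTheory

/-- Freedman's inequality for martingale difference sequences. -/
theorem stmt18 {Ω : Type*} {mΩ : MeasurableSpace Ω} (μ : Measure Ω)
    [IsProbabilityMeasure μ] (𝔉 : Filtration ℕ mΩ) (T : ℕ)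
    (X : ℕ → Ω → ℝ) (b V : ℝ) (hb : 0 < b) (hV : 0 < V)
    (hadapt : ∀ t, StronglyMeasurable[𝔉 t] (X t))
    (hint : ∀ t, Integrable (X t) μ)
    (hint2 : ∀ t, Integrable (fun ω => (X t ω) ^ 2) μ)
    (hmean : ∀ t, 1 ≤ t → μ[X t | 𝔉 (t - 1)] =ᵐ[μ] 0)
    (hbdd : ∀ t, ∀ᵐ ω ∂μ, |X t ω| ≤ b)
    (hvar : ∀ᵐ ω ∂μ,
      ∑ t ∈ Finset.Icc 1 T, (μ[fun ω' => (X t ω') ^ 2 | 𝔉 (t - 1)]) ω ≤ V)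
    (δ : ℝ) (hδ : δ ∈ Set.Ioo (0 : ℝ) 1) :
    ENNReal.ofReal (1 - δ) ≤
      μ {ω | ∑ t ∈ Finset.Icc 1 T, X t ω
        ≤ 2 * Real.sqrt (V * Real.log (1 / δ)) + b * Real.log (1 / δ)} := by
  obtain ⟨hδ0, hδ1⟩ := hδ
  set L : ℝ := Real.log (1 / δ) with hL_def
  have hL : 0 < L := Real.log_pos (one_lt_one_div hδ0 hδ1)
  set a : ℝ := 2 * Real.sqrt (V * L) + b * L with ha_def
  -- choose l
  obtain ⟨l, hl0, hlb, hla⟩ : ∃ l : ℝ, 0 < l ∧ l * b ≤ 1 ∧ L ≤ l * a - l ^ 2 * V := by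
    have hLV : 0 < L / V := div_pos hL hV
    have hsq : Real.sqrt (L / V) ^ 2 = L / V := Real.sq_sqrt hLV.le
    have hsVL : Real.sqrt (L / V) * Real.sqrt (V * L) = L := by
      rw [← Real.sqrt_mul hLV.le]
      rw [show L / V * (V * L) = L ^ 2 by field_simp]
      exact Real.sqrt_sq hL.le
    by_cases h : Real.sqrt (L / V) ≤ 1 / b
    · refine ⟨Real.sqrt (L / V), Real.sqrt_pos.mpr hLV, ?_, ?_⟩
      · calc Real.sqrt (L / V) * b ≤ (1 / b) * b := by nlinarith
          _ = 1 := by field_simp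
      · have e1 : Real.sqrt (L / V) ^ 2 * V = L := by rw [hsq]; field_simp
        have e2 : Real.sqrt (L / V) * a = 2 * L + Real.sqrt (L / V) * (b * L) := by
          rw [ha_def]; linear_combination 2 * hsVL
        rw [e2, e1]
        nlinarith [mul_nonneg (mul_nonneg (Real.sqrt_nonneg (L / V)) hb.le) hL.le]
    · push_neg at h
      refine ⟨1 / b, by positivity, by field_simp; exact le_refl _, ?_⟩
      have hb2 : (1 / b) ^ 2 < L / V := by
        calc (1 / b) ^ 2 < Real.sqrt (L / V) ^ 2 :=
              pow_lt_pow_left₀ h (by positivity) (by norm_num)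
          _ = L / V := hsq
      have hVb : V < b ^ 2 * L := by
        rw [div_pow, one_pow] at hb2
        have h' := (div_lt_div_iff₀ (by positivity) hV).mp hb2
        calc V = 1 * V := (one_mul V).symm
          _ < L * b ^ 2 := h'
          _ = b ^ 2 * L := by ring
      have hVb' : V / b ≤ b * L := by rw [div_le_iff₀ hb]; nlinarith
      have hs_ge : V / b ≤ Real.sqrt (V * L) := by
        have e : (V / b) ^ 2 ≤ V * L := by
          calc (V / b) ^ 2 = (V / b) * (V / b) := by ring
            _ ≤ (V / b) * (b * L) := by
                apply mul_le_mul_of_nonneg_left hVb' (by positivity)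
            _ = V * L := by field_simp
        calc V / b = Real.sqrt ((V / b) ^ 2) := (Real.sqrt_sq (by positivity)).symm
          _ ≤ Real.sqrt (V * L) := Real.sqrt_le_sqrt e
      have hexp : 1 / b * a - (1 / b) ^ 2 * V
          = 2 * Real.sqrt (V * L) / b + L - V / b ^ 2 := by
        rw [ha_def]; field_simp
      rw [hexp]
      have h1 : V / b ^ 2 ≤ Real.sqrt (V * L) / b := by
        rw [show V / b ^ 2 = V / b / b by rw [div_div, sq]]
        exact (div_le_div_iff_of_pos_right hb).mpr hs_ge
      have h2 : (0:ℝ) ≤ Real.sqrt (V * L) / b := by positivity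
      have h3 : 2 * Real.sqrt (V * L) / b = 2 * (Real.sqrt (V * L) / b) := by ring
      rw [h3]
      linarith
  -- apply the supermartingale bound
  obtain ⟨hM_int, hsup⟩ := freedman_aux μ 𝔉 X b l hl0.le hlb hadapt hint hint2 hmean hbdd T
  set v : ℕ → Ω → ℝ := fun t => μ[fun ω' => (X t ω') ^ 2 | 𝔉 (t - 1)] with hv_def
  set M : Ω → ℝ := fun ω => Real.exp (l * ∑ t ∈ Finset.Icc 1 T, X t ω
      - l ^ 2 * ∑ t ∈ Finset.Icc 1 T, v t ω) with hM_def
  -- Markov's inequality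
  have hMarkov := mul_meas_ge_le_integral_of_nonneg
    (f := M) (Filter.Eventually.of_forall fun ω => (Real.exp_pos _).le) hM_int (Real.exp L)
  have hEL : Real.exp L = 1 / δ := Real.exp_log (by positivity)
  have htoReal : (μ {ω | Real.exp L ≤ M ω}).toReal ≤ δ := by
    have h1 := hMarkov.trans hsup
    rw [hEL, one_div] at h1 ⊢
    have h2 := (inv_mul_le_iff₀ hδ0).mp h1
    simp at h2
    exact h2
  have hmeas_le : μ {ω | Real.exp L ≤ M ω} ≤ ENNReal.ofReal δ := by
    rw [← ENNReal.ofReal_toReal (measure_ne_top μ _)]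
    exact ENNReal.ofReal_le_ofReal htoReal
  -- a.e. inclusion of the bad event
  have hsub : ∀ᵐ ω ∂μ, a < ∑ t ∈ Finset.Icc 1 T, X t ω → Real.exp L ≤ M ω := by
    filter_upwards [hvar] with ω hω hS
    apply Real.exp_le_exp.mpr
    have e1 : l * a ≤ l * ∑ t ∈ Finset.Icc 1 T, X t ω :=
      mul_le_mul_of_nonneg_left hS.le hl0.le
    have e2 : l ^ 2 * ∑ t ∈ Finset.Icc 1 T, v t ω ≤ l ^ 2 * V :=
      mul_le_mul_of_nonneg_left hω (sq_nonneg l)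
    linarith
  have hA_le : μ {ω | a < ∑ t ∈ Finset.Icc 1 T, X t ω} ≤ ENNReal.ofReal δ := by
    refine le_trans (measure_mono_ae ?_) hmeas_le
    filter_upwards [hsub] with ω h hx
    exact h hx
  -- wrap up
  have hBmeas : MeasurableSet {ω | ∑ t ∈ Finset.Icc 1 T, X t ω ≤ a} := by
    apply measurableSet_le
    · exact Finset.measurable_sum _ fun t _ => ((hadapt t).mono (𝔉.le t)).measurable
    · exact measurable_const
  have hcompl : μ {ω | ∑ t ∈ Finset.Icc 1 T, X t ω ≤ a}ᶜ ≤ ENNReal.ofReal δ := by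
    calc μ {ω | ∑ t ∈ Finset.Icc 1 T, X t ω ≤ a}ᶜ
        = μ {ω | a < ∑ t ∈ Finset.Icc 1 T, X t ω} := by
          congr 1
          ext ω
          simp [not_le]
      _ ≤ ENNReal.ofReal δ := hA_le
  have hadd : μ {ω | ∑ t ∈ Finset.Icc 1 T, X t ω ≤ a}
      + μ {ω | ∑ t ∈ Finset.Icc 1 T, X t ω ≤ a}ᶜ = 1 := by
    rw [measure_add_measure_compl hBmeas, measure_univ]
  have hsum1 : ENNReal.ofReal (1 - δ) + ENNReal.ofReal δ = 1 := by
    rw [← ENNReal.ofReal_add (by linarith) hδ0.le]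
    norm_num
  have hfin : ENNReal.ofReal δ ≠ ⊤ := ENNReal.ofReal_ne_top
  refine (ENNReal.add_le_add_iff_right hfin).mp ?_
  rw [hsum1]
  calc (1 : ENNReal)
      = μ {ω | ∑ t ∈ Finset.Icc 1 T, X t ω ≤ a}
        + μ {ω | ∑ t ∈ Finset.Icc 1 T, X t ω ≤ a}ᶜ := hadd.symm
    _ ≤ μ {ω | ∑ t ∈ Finset.Icc 1 T, X t ω ≤ a} + ENNReal.ofReal δ :=
      add_le_add le_rfl hcompl
end

section
/- Consider the class F of functions f: B^d -> R of the form f(phi) = min{ <w, phi> + beta*||phi||_{Lambda^{-1}}, H }, where the parameters satisfy ||w||_2 <= B_w, beta in [0, B], and Lambda >= lambda*I (Loewner order) for fixed B_w, B, H, lambda > 0. For any eps > 0, the eps-covering number of F in the sup-distance dist(f, f') = sup_{phi in B^d} |f(phi) - f'(phi)| satisfies log N(F, dist, eps) <= d*log(1 + 4*B_w/eps) + d^2*log(1 + 8*sqrt(d)*B^2/(lambda*eps^2)). -/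
open Matrix
open Metric MeasureTheory
open scoped ENNReal

/-- The class of truncated optimistic linear value functions
f(φ) = min{⟨w, φ⟩ + β‖φ‖_{Λ⁻¹}, H} with ‖w‖₂ ≤ Bw, β ∈ [0, B], Λ ⪰ lam·I. -/
def Fclass (d : ℕ) (Bw B H lam : ℝ) : Set ((Fin d → ℝ) → ℝ) :=
  {f | ∃ (w : Fin d → ℝ) (β : ℝ) (Λ : Matrix (Fin d) (Fin d) ℝ),
    Real.sqrt (w ⬝ᵥ w) ≤ Bw ∧ β ∈ Set.Icc 0 B ∧
    (Λ - lam • (1 : Matrix (Fin d) (Fin d) ℝ)).PosSemidef ∧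
    ∀ φ : Fin d → ℝ, f φ = min (w ⬝ᵥ φ + β * mnorm Λ⁻¹ φ) H}



lemma net_lemma {ι : Type} [Fintype ι] (S : Set (EuclideanSpace ℝ ι)) {R δ : ℝ}
    (hR : 0 ≤ R) (hδ : 0 < δ) (hS : S ⊆ Metric.closedBall 0 R) :
    ∃ T : Finset (EuclideanSpace ℝ ι), ↑T ⊆ S ∧
      (T.card : ℝ) ≤ (1 + 2 * R / δ) ^ (Fintype.card ι) ∧
      ∀ x ∈ S, ∃ y ∈ T, dist x y ≤ δ := by
  classical
  set Sep : Finset (EuclideanSpace ℝ ι) → Prop :=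
    fun T => ↑T ⊆ S ∧ ∀ a ∈ T, ∀ b ∈ T, a ≠ b → δ ≤ dist a b with hSep
  set v : ℝ≥0∞ := volume (ball (0:EuclideanSpace ℝ ι) 1) with hv
  set n := Fintype.card ι with hn
  have hv0 : v ≠ 0 := (measure_ball_pos _ _ one_pos).ne'
  have hvt : v ≠ ⊤ := measure_ball_lt_top.ne
  have key : ∀ T : Finset (EuclideanSpace ℝ ι), Sep T → (T.card : ℝ) ≤ (1 + 2 * R / δ) ^ n := by
    intro T hT
    have hdisj : (↑T : Set (EuclideanSpace ℝ ι)).PairwiseDisjoint (fun y => ball y (δ/2)) := by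
      intro a ha b hb hab
      apply ball_disjoint_ball
      calc δ/2 + δ/2 = δ := by ring
        _ ≤ dist a b := hT.2 a ha b hb hab
    have hvol : ∀ y : EuclideanSpace ℝ ι,
        volume (ball y (δ/2)) = ENNReal.ofReal ((δ/2) ^ n) * v := by
      intro y
      rw [Measure.addHaar_ball_of_pos volume y (by linarith), finrank_euclideanSpace]
    have hsub : (⋃ y ∈ T, ball y (δ/2)) ⊆ ball (0:EuclideanSpace ℝ ι) (R + δ/2) := by
      intro z hz
      simp only [Set.mem_iUnion] at hz
      obtain ⟨y, hy, hzy⟩ := hz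
      have hyR : dist y 0 ≤ R := mem_closedBall.mp (hS (hT.1 hy))
      have h' := mem_ball.mp hzy
      have h'' : dist z 0 ≤ dist z y + dist y 0 := dist_triangle _ _ _
      rw [mem_ball]
      linarith
    have h1 : (T.card : ℝ≥0∞) * (ENNReal.ofReal ((δ/2) ^ n) * v)
        ≤ ENNReal.ofReal ((R + δ/2) ^ n) * v := by
      calc (T.card : ℝ≥0∞) * (ENNReal.ofReal ((δ/2) ^ n) * v)
          = ∑ y ∈ T, volume (ball y (δ/2)) := by
            rw [Finset.sum_congr rfl (fun y _ => hvol y), Finset.sum_const, nsmul_eq_mul]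
        _ = volume (⋃ y ∈ T, ball y (δ/2)) :=
            (measure_biUnion_finset hdisj (fun _ _ => measurableSet_ball)).symm
        _ ≤ volume (ball (0:EuclideanSpace ℝ ι) (R + δ/2)) := measure_mono hsub
        _ = ENNReal.ofReal ((R + δ/2) ^ n) * v := by
            rw [Measure.addHaar_ball_of_pos volume _ (by linarith), finrank_euclideanSpace]
    have h2 : (T.card : ℝ≥0∞) * ENNReal.ofReal ((δ/2) ^ n)
        ≤ ENNReal.ofReal ((R + δ/2) ^ n) := by
      rw [← mul_assoc] at h1
      exact (ENNReal.mul_le_mul_iff_left hv0 hvt).mp h1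
    have h3 : (T.card : ℝ) * ((δ/2) ^ n) ≤ (R + δ/2) ^ n := by
      rw [← ENNReal.ofReal_natCast, ← ENNReal.ofReal_mul (by positivity)] at h2
      exact (ENNReal.ofReal_le_ofReal_iff (by positivity)).mp h2
    have hd2 : (0:ℝ) < (δ/2) ^ n := by positivity
    rw [← le_div_iff₀ hd2] at h3
    calc (T.card : ℝ) ≤ (R + δ/2) ^ n / (δ/2) ^ n := h3
      _ = ((R + δ/2) / (δ/2)) ^ n := (div_pow _ _ _).symm
      _ = (1 + 2 * R / δ) ^ n := by
          congr 1
          field_simp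
          ring
  -- maximal separated set
  set K : Set ℕ := {k | ∃ T : Finset (EuclideanSpace ℝ ι), Sep T ∧ T.card = k} with hK
  have h0K : 0 ∈ K := ⟨∅, ⟨by simp, by simp⟩, rfl⟩
  have hbdd : BddAbove K := by
    refine ⟨⌈(1 + 2 * R / δ) ^ n⌉₊, fun k hk => ?_⟩
    obtain ⟨T, hT, rfl⟩ := hk
    exact_mod_cast (key T hT).trans (Nat.le_ceil _)
  have hmem := Nat.sSup_mem ⟨0, h0K⟩ hbdd
  obtain ⟨T, hT, hcard⟩ := hmem
  refine ⟨T, hT.1, hcard ▸ key T hT, ?_⟩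
  intro x hx
  by_contra hcon
  push_neg at hcon
  have hxT : x ∉ T := by
    intro hxT
    have := hcon x hxT
    rw [dist_self] at this
    linarith
  have hSep' : Sep (insert x T) := by
    constructor
    · rw [Finset.coe_insert]
      exact Set.insert_subset hx hT.1
    · intro a ha b hb hab
      rw [Finset.mem_insert] at ha hb
      rcases ha with rfl | ha
      · rcases hb with rfl | hb
        · exact absurd rfl hab
        · exact le_of_lt (hcon b hb)
      · rcases hb with rfl | hb
        · rw [dist_comm]; exact le_of_lt (hcon a ha)
        · exact hT.2 a ha b hb hab
  have hK1 : T.card + 1 ∈ K :=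
    ⟨insert x T, hSep', by rw [Finset.card_insert_of_notMem hxT]⟩
  have := le_csSup hbdd hK1
  omega


lemma dot_self_nonneg' {ι : Type} [Fintype ι] (x : ι → ℝ) : 0 ≤ x ⬝ᵥ x :=
  Finset.sum_nonneg fun _ _ => mul_self_nonneg _

lemma norm_toE {ι : Type} [Fintype ι] (x : ι → ℝ) :
    ‖(WithLp.equiv 2 (ι → ℝ)).symm x‖ = Real.sqrt (x ⬝ᵥ x) := by
  rw [EuclideanSpace.norm_eq]
  congr 1
  simp [dotProduct, Real.norm_eq_abs, sq_abs, pow_two]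

lemma dot_cs {ι : Type} [Fintype ι] (x y : ι → ℝ) :
    |x ⬝ᵥ y| ≤ Real.sqrt (x ⬝ᵥ x) * Real.sqrt (y ⬝ᵥ y) := by
  have h := abs_real_inner_le_norm ((WithLp.equiv 2 (ι → ℝ)).symm x)
    ((WithLp.equiv 2 (ι → ℝ)).symm y)
  rw [norm_toE, norm_toE] at h
  have h2 : (inner ℝ ((WithLp.equiv 2 (ι → ℝ)).symm x) ((WithLp.equiv 2 (ι → ℝ)).symm y) : ℝ)
      = x ⬝ᵥ y := by
    simp [PiLp.inner_apply, RCLike.inner_apply, dotProduct, mul_comm]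
  rwa [h2] at h

lemma dot_cs_sq {ι : Type} [Fintype ι] (x y : ι → ℝ) :
    (x ⬝ᵥ y)^2 ≤ (x ⬝ᵥ x) * (y ⬝ᵥ y) := by
  have h := dot_cs x y
  have := abs_nonneg (x ⬝ᵥ y)
  nlinarith [Real.sq_sqrt (dot_self_nonneg' x), Real.sq_sqrt (dot_self_nonneg' y),
    Real.sqrt_nonneg (x ⬝ᵥ x), Real.sqrt_nonneg (y ⬝ᵥ y), sq_abs (x ⬝ᵥ y)]

lemma quad_bound {d : ℕ} (M : Matrix (Fin d) (Fin d) ℝ) (φ : Fin d → ℝ) :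
    |φ ⬝ᵥ (M *ᵥ φ)| ≤ Real.sqrt (∑ p : Fin d × Fin d, (M p.1 p.2)^2) * (φ ⬝ᵥ φ) := by
  set F := ∑ p : Fin d × Fin d, (M p.1 p.2)^2 with hF
  have hF0 : 0 ≤ F := Finset.sum_nonneg fun _ _ => sq_nonneg _
  have h1 : (M *ᵥ φ) ⬝ᵥ (M *ᵥ φ) ≤ F * (φ ⬝ᵥ φ) := by
    have hrow : ∀ i, (M *ᵥ φ) i * (M *ᵥ φ) i ≤ (M i ⬝ᵥ M i) * (φ ⬝ᵥ φ) := by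
      intro i
      have h := dot_cs_sq (M i) φ
      have : (M *ᵥ φ) i = M i ⬝ᵥ φ := rfl
      rw [this]
      nlinarith [h]
    calc (M *ᵥ φ) ⬝ᵥ (M *ᵥ φ) = ∑ i, (M *ᵥ φ) i * (M *ᵥ φ) i := rfl
      _ ≤ ∑ i, (M i ⬝ᵥ M i) * (φ ⬝ᵥ φ) := Finset.sum_le_sum fun i _ => hrow i
      _ = (∑ i, M i ⬝ᵥ M i) * (φ ⬝ᵥ φ) := by rw [Finset.sum_mul]
      _ = F * (φ ⬝ᵥ φ) := by
          rw [hF, Fintype.sum_prod_type]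
          congr 1
          exact Finset.sum_congr rfl fun i _ => by
            simp [dotProduct, pow_two]
  calc |φ ⬝ᵥ (M *ᵥ φ)| ≤ Real.sqrt (φ ⬝ᵥ φ) * Real.sqrt ((M *ᵥ φ) ⬝ᵥ (M *ᵥ φ)) := dot_cs _ _
    _ ≤ Real.sqrt (φ ⬝ᵥ φ) * Real.sqrt (F * (φ ⬝ᵥ φ)) := by
        exact mul_le_mul_of_nonneg_left (Real.sqrt_le_sqrt h1) (Real.sqrt_nonneg _)
    _ = Real.sqrt F * (φ ⬝ᵥ φ) := by
        rw [Real.sqrt_mul hF0]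
        rw [show Real.sqrt (φ ⬝ᵥ φ) * (Real.sqrt F * Real.sqrt (φ ⬝ᵥ φ))
            = Real.sqrt F * (Real.sqrt (φ ⬝ᵥ φ) * Real.sqrt (φ ⬝ᵥ φ)) by ring,
          Real.mul_self_sqrt (dot_self_nonneg' φ)]

lemma sqrt_abs_sub (a b : ℝ) (ha : 0 ≤ a) (hb : 0 ≤ b) :
    |Real.sqrt a - Real.sqrt b| ≤ Real.sqrt |a - b| := by
  wlog hab : b ≤ a generalizing a b
  · rw [abs_sub_comm, abs_sub_comm a b]
    exact this b a hb ha (le_of_not_ge hab)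
  have h1 : Real.sqrt b ≤ Real.sqrt a := Real.sqrt_le_sqrt hab
  rw [abs_of_nonneg (by linarith), abs_of_nonneg (by linarith)]
  have h2 : 0 ≤ a - b := by linarith
  nlinarith [Real.sq_sqrt ha, Real.sq_sqrt hb, Real.sq_sqrt h2,
    Real.sqrt_nonneg a, Real.sqrt_nonneg b, Real.sqrt_nonneg (a - b),
    mul_nonneg (Real.sqrt_nonneg b) (Real.sqrt_nonneg (a-b))]

lemma min_lip (a b H : ℝ) : |min a H - min b H| ≤ |a - b| := by
  rcases le_total a H with h1 | h1 <;> rcases le_total b H with h2 | h2 <;>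
    rw [abs_sub_le_iff] <;> constructor <;>
    simp [min_eq_left, min_eq_right, h1, h2] <;>
    cases abs_cases (a - b) <;> linarith

lemma lam_posdef {d : ℕ} {Λ : Matrix (Fin d) (Fin d) ℝ} {lam : ℝ} (hlam : 0 < lam)
    (hΛ : (Λ - lam • (1 : Matrix (Fin d) (Fin d) ℝ)).PosSemidef) : Λ.PosDef := by
  refine Matrix.PosDef.of_dotProduct_mulVec_pos ?_ ?_
  · have h1 := hΛ.1
    have h2 : (lam • (1 : Matrix (Fin d) (Fin d) ℝ)).IsHermitian := by
      unfold Matrix.IsHermitian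
      rw [Matrix.conjTranspose_smul]
      simp
    have h3 := h1.add h2
    simpa using h3
  · intro x hx
    have h := hΛ.dotProduct_mulVec_nonneg x
    have hsx : star x = x := rfl
    have hΛx : x ⬝ᵥ ((Λ - lam • (1 : Matrix (Fin d) (Fin d) ℝ)) *ᵥ x)
        = x ⬝ᵥ (Λ *ᵥ x) - lam * (x ⬝ᵥ x) := by
      rw [Matrix.sub_mulVec, dotProduct_sub, Matrix.smul_mulVec,
        Matrix.one_mulVec, dotProduct_smul, smul_eq_mul]
    rw [hsx, hΛx] at h
    have hxx : 0 < x ⬝ᵥ x :=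
      lt_of_le_of_ne (dot_self_nonneg' x) (Ne.symm (fun h0 => hx (dotProduct_self_eq_zero.mp h0)))
    rw [hsx]
    nlinarith

lemma lam_inv_vec_bound {d : ℕ} {Λ : Matrix (Fin d) (Fin d) ℝ} {lam : ℝ} (hlam : 0 < lam)
    (hΛ : (Λ - lam • (1 : Matrix (Fin d) (Fin d) ℝ)).PosSemidef) (ψ : Fin d → ℝ) :
    lam^2 * ((Λ⁻¹ *ᵥ ψ) ⬝ᵥ (Λ⁻¹ *ᵥ ψ)) ≤ ψ ⬝ᵥ ψ := by
  have hpd := lam_posdef hlam hΛ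
  have hmul : Λ * Λ⁻¹ = 1 :=
    Matrix.mul_nonsing_inv _ ((Matrix.isUnit_iff_isUnit_det _).mp hpd.isUnit)
  set u := Λ⁻¹ *ᵥ ψ with hu
  have hΛu : Λ *ᵥ u = ψ := by rw [hu, Matrix.mulVec_mulVec, hmul, Matrix.one_mulVec]
  have h := hΛ.dotProduct_mulVec_nonneg u
  have hsu : star u = u := rfl
  have hexp : u ⬝ᵥ ((Λ - lam • (1 : Matrix (Fin d) (Fin d) ℝ)) *ᵥ u)
      = u ⬝ᵥ ψ - lam * (u ⬝ᵥ u) := by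
    rw [Matrix.sub_mulVec, dotProduct_sub, Matrix.smul_mulVec,
      Matrix.one_mulVec, dotProduct_smul, smul_eq_mul, hΛu]
  rw [hsu, hexp] at h
  have h1 : lam * (u ⬝ᵥ u) ≤ u ⬝ᵥ ψ := by linarith
  have hcs := (le_abs_self (u ⬝ᵥ ψ)).trans (dot_cs u ψ)
  have ha := dot_self_nonneg' u
  have hb := dot_self_nonneg' ψ
  rcases eq_or_lt_of_le ha with h0 | h0
  · rw [← h0]; simpa using hb
  · have hsa : 0 < Real.sqrt (u ⬝ᵥ u) := Real.sqrt_pos.mpr h0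
    have h2 : lam * (u ⬝ᵥ u) ≤ Real.sqrt (u ⬝ᵥ u) * Real.sqrt (ψ ⬝ᵥ ψ) := h1.trans hcs
    have hsq1 := Real.sq_sqrt ha
    have hsq2 := Real.sq_sqrt hb
    nlinarith [Real.sqrt_nonneg (ψ ⬝ᵥ ψ), sq_nonneg (lam * Real.sqrt (u ⬝ᵥ u) - Real.sqrt (ψ ⬝ᵥ ψ))]

lemma lam_inv_frob {d : ℕ} {Λ : Matrix (Fin d) (Fin d) ℝ} {lam : ℝ} (hlam : 0 < lam)
    (hΛ : (Λ - lam • (1 : Matrix (Fin d) (Fin d) ℝ)).PosSemidef) :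
    ∑ p : Fin d × Fin d, (Λ⁻¹ p.1 p.2)^2 ≤ d / lam^2 := by
  have hcol : ∀ j, ∑ i, (Λ⁻¹ i j)^2 ≤ 1 / lam^2 := by
    intro j
    have h := lam_inv_vec_bound hlam hΛ (Pi.single j 1)
    have h1 : Λ⁻¹ *ᵥ Pi.single j 1 = fun i => Λ⁻¹ i j := by
      rw [Matrix.mulVec_single]
      funext i
      simp
    have h2 : (Pi.single j 1 : Fin d → ℝ) ⬝ᵥ Pi.single j 1 = 1 := by
      simp [dotProduct, Pi.single_apply]
    rw [h1, h2] at h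
    have h3 : ((fun i => Λ⁻¹ i j) ⬝ᵥ fun i => Λ⁻¹ i j) = ∑ i, (Λ⁻¹ i j)^2 := by
      simp [dotProduct, pow_two]
    rw [h3] at h
    rw [le_div_iff₀ (by positivity)]
    linarith
  calc ∑ p : Fin d × Fin d, (Λ⁻¹ p.1 p.2)^2
      = ∑ i, ∑ j, (Λ⁻¹ i j)^2 := Fintype.sum_prod_type _
    _ = ∑ j : Fin d, ∑ i, (Λ⁻¹ i j)^2 := Finset.sum_comm
    _ ≤ ∑ _j : Fin d, 1 / lam^2 := Finset.sum_le_sum fun j _ => hcol j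
    _ = d / lam^2 := by simp [div_eq_mul_inv]

lemma dist_toE {ι : Type} [Fintype ι] (x : ι → ℝ) (y : EuclideanSpace ℝ ι) :
    dist ((WithLp.equiv 2 (ι → ℝ)).symm x) y
      = Real.sqrt ((x - WithLp.equiv 2 (ι → ℝ) y) ⬝ᵥ (x - WithLp.equiv 2 (ι → ℝ) y)) := by
  rw [dist_eq_norm, ← norm_toE]
  congr 1

lemma lam_inv_quad_nonneg {d : ℕ} {Λ : Matrix (Fin d) (Fin d) ℝ} {lam : ℝ} (hlam : 0 < lam)
    (hΛ : (Λ - lam • (1 : Matrix (Fin d) (Fin d) ℝ)).PosSemidef) (φ : Fin d → ℝ) :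
    0 ≤ φ ⬝ᵥ (Λ⁻¹ *ᵥ φ) := by
  have h := ((lam_posdef hlam hΛ).inv.posSemidef).dotProduct_mulVec_nonneg φ
  simpa using h

lemma sqrt_quad_eq {d : ℕ} {β : ℝ} (hβ : 0 ≤ β) (Λ : Matrix (Fin d) (Fin d) ℝ)
    (φ : Fin d → ℝ) :
    Real.sqrt (φ ⬝ᵥ ((β^2 • Λ⁻¹) *ᵥ φ)) = β * mnorm Λ⁻¹ φ := by
  rw [Matrix.smul_mulVec, dotProduct_smul, smul_eq_mul,
    Real.sqrt_mul (sq_nonneg β), Real.sqrt_sq hβ, mnorm]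

/-- covering number bound for the class of truncated optimistic
linear value functions, in the sup-distance over the unit ball. -/
theorem stmt19 (d : ℕ) (Bw B H lam eps : ℝ)
    (hBw : 0 < Bw) (hB : 0 < B) (hH : 0 < H) (hlam : 0 < lam) (heps : 0 < eps) :
    ∃ N : Set ((Fin d → ℝ) → ℝ), N ⊆ Fclass d Bw B H lam ∧ N.Finite ∧
      Real.log N.ncard
        ≤ d * Real.log (1 + 4 * Bw / eps)
          + d ^ 2 * Real.log (1 + 8 * Real.sqrt d * B ^ 2 / (lam * eps ^ 2)) ∧
      ∀ f ∈ Fclass d Bw B H lam, ∃ g ∈ N,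
        ∀ φ : Fin d → ℝ, Real.sqrt (φ ⬝ᵥ φ) ≤ 1 → |f φ - g φ| ≤ eps := by
  classical
  set ew := WithLp.equiv 2 (Fin d → ℝ) with hew
  set em := WithLp.equiv 2 (Fin d × Fin d → ℝ) with hem
  -- the w-net
  obtain ⟨Tw, hTwS, hTwcard, hTwnet⟩ :=
    net_lemma (Metric.closedBall (0 : EuclideanSpace ℝ (Fin d)) Bw) hBw.le
      (show 0 < eps/2 by linarith) (subset_refl _)
  -- the matrix net
  set RA := Real.sqrt d * B^2 / lam with hRA
  have hRA0 : 0 ≤ RA := by positivity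
  set SA : Set (EuclideanSpace ℝ (Fin d × Fin d)) :=
    {a | ∃ (β : ℝ) (Λ : Matrix (Fin d) (Fin d) ℝ), β ∈ Set.Icc 0 B ∧
      (Λ - lam • (1 : Matrix (Fin d) (Fin d) ℝ)).PosSemidef ∧
      a = em.symm (fun p => β^2 * Λ⁻¹ p.1 p.2)} with hSA
  have hSAsub : SA ⊆ Metric.closedBall 0 RA := by
    rintro a ⟨β, Λ, hβ, hΛ, rfl⟩
    rw [Metric.mem_closedBall, dist_zero_right, norm_toE]
    have hfrob := lam_inv_frob hlam hΛ
    have hS0 : 0 ≤ ∑ p : Fin d × Fin d, (Λ⁻¹ p.1 p.2)^2 :=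
      Finset.sum_nonneg fun _ _ => sq_nonneg _
    have hx : (fun (p : Fin d × Fin d) => β^2 * Λ⁻¹ p.1 p.2) ⬝ᵥ (fun (p : Fin d × Fin d) => β^2 * Λ⁻¹ p.1 p.2)
        = β^4 * ∑ p : Fin d × Fin d, (Λ⁻¹ p.1 p.2)^2 := by
      rw [dotProduct, Finset.mul_sum]
      exact Finset.sum_congr rfl fun (p : Fin d × Fin d) _ => by ring
    have hβ4 : β^4 ≤ B^4 := pow_le_pow_left₀ hβ.1 hβ.2 4
    have hRA2 : RA^2 = (d : ℝ) * B^4 / lam^2 := by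
      rw [hRA, div_pow, mul_pow, Real.sq_sqrt (Nat.cast_nonneg d)]
      ring
    have hXle : (fun (p : Fin d × Fin d) => β^2 * Λ⁻¹ p.1 p.2) ⬝ᵥ (fun (p : Fin d × Fin d) => β^2 * Λ⁻¹ p.1 p.2) ≤ RA^2 := by
      rw [hx, hRA2]
      calc β^4 * ∑ p : Fin d × Fin d, (Λ⁻¹ p.1 p.2)^2
          ≤ B^4 * ((d : ℝ) / lam^2) :=
            mul_le_mul hβ4 hfrob hS0 (by positivity)
        _ = (d : ℝ) * B^4 / lam^2 := by ring
    calc Real.sqrt ((fun (p : Fin d × Fin d) => β^2 * Λ⁻¹ p.1 p.2) ⬝ᵥ (fun (p : Fin d × Fin d) => β^2 * Λ⁻¹ p.1 p.2))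
        ≤ Real.sqrt (RA^2) := Real.sqrt_le_sqrt hXle
      _ = RA := Real.sqrt_sq hRA0
  obtain ⟨TA, hTAS, hTAcard, hTAnet⟩ :=
    net_lemma SA hRA0 (show 0 < eps^2/4 by positivity) hSAsub
  -- the function net
  set G : EuclideanSpace ℝ (Fin d) → EuclideanSpace ℝ (Fin d × Fin d) → ((Fin d → ℝ) → ℝ) :=
    fun pw pa φ => min ((ew pw) ⬝ᵥ φ
      + Real.sqrt (φ ⬝ᵥ ((Matrix.of fun i j => (em pa) (i, j)) *ᵥ φ))) H with hG
  set TT : Finset ((Fin d → ℝ) → ℝ) := (Tw ×ˢ TA).image (fun q => G q.1 q.2) with hTT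
  refine ⟨↑TT, ?_, TT.finite_toSet, ?_, ?_⟩
  · -- N ⊆ Fclass
    intro g hg
    rw [Finset.mem_coe, Finset.mem_image] at hg
    obtain ⟨q, hq, rfl⟩ := hg
    rw [Finset.mem_product] at hq
    obtain ⟨β, Λ, hβ, hΛ, hqa⟩ := hTAS hq.2
    refine ⟨ew q.1, β, Λ, ?_, hβ, hΛ, ?_⟩
    · have h1 : Real.sqrt ((ew q.1) ⬝ᵥ (ew q.1)) = ‖q.1‖ := by
        rw [← norm_toE, Equiv.symm_apply_apply]
      rw [h1]
      have := hTwS hq.1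
      rwa [Metric.mem_closedBall, dist_zero_right] at this
    · intro φ
      have hMg : (Matrix.of fun i j => (em q.2) (i, j)) = β^2 • Λ⁻¹ := by
        have h2 : em q.2 = fun p => β^2 * Λ⁻¹ p.1 p.2 := by
          rw [hqa, Equiv.apply_symm_apply]
        ext i j
        rw [h2]
        simp
      rw [hG]
      simp only []
      rw [hMg, sqrt_quad_eq hβ.1 Λ φ]
  · -- cardinality
    have hc1 : (1:ℝ) + 2 * Bw / (eps/2) = 1 + 4 * Bw / eps := by
      field_simp
      ring
    have hc2 : (1:ℝ) + 2 * RA / (eps^2/4) = 1 + 8 * Real.sqrt d * B^2 / (lam * eps^2) := by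
      rw [hRA]
      field_simp
      ring
    rw [hc1, Fintype.card_fin] at hTwcard
    rw [hc2] at hTAcard
    have hcardprod : (Fintype.card (Fin d × Fin d)) = d^2 := by
      simp [pow_two]
    rw [hcardprod] at hTAcard
    set C1 := (1:ℝ) + 4 * Bw / eps with hC1
    set C2 := (1:ℝ) + 8 * Real.sqrt d * B^2 / (lam * eps^2) with hC2
    have hC1one : (1:ℝ) ≤ C1 := by
      rw [hC1]
      have : 0 ≤ 4 * Bw / eps := by positivity
      linarith
    have hC2one : (1:ℝ) ≤ C2 := by
      rw [hC2]
      have : 0 ≤ 8 * Real.sqrt d * B^2 / (lam * eps^2) := by positivity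
      linarith
    have hcard : ((↑TT : Set ((Fin d → ℝ) → ℝ)).ncard : ℝ) ≤ C1 ^ d * C2 ^ (d^2) := by
      rw [Set.ncard_coe_finset]
      have h1 : (TT.card : ℝ) ≤ (Tw.card : ℝ) * (TA.card : ℝ) := by
        have := Finset.card_image_le (s := Tw ×ˢ TA) (f := fun q => G q.1 q.2)
        rw [Finset.card_product] at this
        exact_mod_cast this
      calc (TT.card : ℝ) ≤ (Tw.card : ℝ) * (TA.card : ℝ) := h1
        _ ≤ C1 ^ d * C2 ^ (d^2) :=
          mul_le_mul hTwcard hTAcard (Nat.cast_nonneg _) (by positivity)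
    rcases Nat.eq_zero_or_pos (↑TT : Set ((Fin d → ℝ) → ℝ)).ncard with h0 | h0
    · rw [h0]
      push_cast
      rw [Real.log_zero]
      have := Real.log_nonneg hC1one
      have := Real.log_nonneg hC2one
      positivity
    · have hlog := Real.log_le_log (by exact_mod_cast h0) hcard
      rw [Real.log_mul (by positivity) (by positivity), Real.log_pow, Real.log_pow] at hlog
      push_cast at hlog ⊢
      linarith
  · -- covering property
    intro f hf
    obtain ⟨w, β, Λ, hw, hβ, hΛ, hfw⟩ := hf
    have hwball : ew.symm w ∈ Metric.closedBall (0 : EuclideanSpace ℝ (Fin d)) Bw := by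
      rw [Metric.mem_closedBall, dist_zero_right, norm_toE]
      exact hw
    obtain ⟨pw, hpwT, hpwd⟩ := hTwnet _ hwball
    set a : Fin d × Fin d → ℝ := fun p => β^2 * Λ⁻¹ p.1 p.2 with ha
    have haS : em.symm a ∈ SA := ⟨β, Λ, hβ, hΛ, rfl⟩
    obtain ⟨pa, hpaT, hpad⟩ := hTAnet _ haS
    refine ⟨G pw pa, ?_, ?_⟩
    · rw [Finset.mem_coe, hTT, Finset.mem_image]
      exact ⟨(pw, pa), Finset.mem_product.mpr ⟨hpwT, hpaT⟩, rfl⟩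
    · intro φ hφ
      have hφφ : φ ⬝ᵥ φ ≤ 1 := by
        have h1 := Real.sq_sqrt (dot_self_nonneg' φ)
        nlinarith [Real.sqrt_nonneg (φ ⬝ᵥ φ)]
      -- the two matrices
      set Mg : Matrix (Fin d) (Fin d) ℝ := Matrix.of fun i j => (em pa) (i, j) with hMg
      obtain ⟨β', Λ', hβ', hΛ', hpa⟩ := hTAS hpaT
      have hempa : em pa = fun p => β'^2 * Λ'⁻¹ p.1 p.2 := by
        rw [hpa, Equiv.apply_symm_apply]
      have hMg' : Mg = β'^2 • Λ'⁻¹ := by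
        ext i j
        rw [hMg]
        simp [hempa]
      -- rewrite f and g
      have hfφ : f φ = min (w ⬝ᵥ φ + Real.sqrt (φ ⬝ᵥ ((β^2 • Λ⁻¹) *ᵥ φ))) H := by
        rw [hfw, sqrt_quad_eq hβ.1 Λ φ]
      have hgφ : G pw pa φ = min ((ew pw) ⬝ᵥ φ + Real.sqrt (φ ⬝ᵥ (Mg *ᵥ φ))) H := rfl
      rw [hfφ, hgφ]
      -- bound via min_lip
      refine (min_lip _ _ H).trans ?_
      have hterm1 : |w ⬝ᵥ φ - (ew pw) ⬝ᵥ φ| ≤ eps/2 := by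
        rw [← sub_dotProduct]
        have hcs := dot_cs (w - ew pw) φ
        have hdist := dist_toE w pw
        rw [hdist] at hpwd
        calc |(w - ew pw) ⬝ᵥ φ|
            ≤ Real.sqrt ((w - ew pw) ⬝ᵥ (w - ew pw)) * Real.sqrt (φ ⬝ᵥ φ) := hcs
          _ ≤ (eps/2) * 1 := by
              apply mul_le_mul hpwd hφ (Real.sqrt_nonneg _) (by linarith)
          _ = eps/2 := mul_one _
      have hterm2 : |Real.sqrt (φ ⬝ᵥ ((β^2 • Λ⁻¹) *ᵥ φ)) - Real.sqrt (φ ⬝ᵥ (Mg *ᵥ φ))|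
          ≤ eps/2 := by
        have hq1 : 0 ≤ φ ⬝ᵥ ((β^2 • Λ⁻¹) *ᵥ φ) := by
          rw [Matrix.smul_mulVec, dotProduct_smul, smul_eq_mul]
          exact mul_nonneg (sq_nonneg β) (lam_inv_quad_nonneg hlam hΛ φ)
        have hq2 : 0 ≤ φ ⬝ᵥ (Mg *ᵥ φ) := by
          rw [hMg', Matrix.smul_mulVec, dotProduct_smul, smul_eq_mul]
          exact mul_nonneg (sq_nonneg β') (lam_inv_quad_nonneg hlam hΛ' φ)
        refine (sqrt_abs_sub _ _ hq1 hq2).trans ?_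
        have hdiff : φ ⬝ᵥ ((β^2 • Λ⁻¹) *ᵥ φ) - φ ⬝ᵥ (Mg *ᵥ φ)
            = φ ⬝ᵥ (((β^2 • Λ⁻¹) - Mg) *ᵥ φ) := by
          rw [Matrix.sub_mulVec, dotProduct_sub]
        have hqb := quad_bound ((β^2 • Λ⁻¹) - Mg) φ
        have hfro : Real.sqrt (∑ p : Fin d × Fin d, (((β^2 • Λ⁻¹) - Mg) p.1 p.2)^2)
            = dist (em.symm a) pa := by
          rw [dist_toE]
          congr 1
          rw [dotProduct]
          refine Finset.sum_congr rfl fun p _ => ?_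
          have h1 : ((β^2 • Λ⁻¹) - Mg) p.1 p.2 = (a - em pa) p := by
            simp [ha, hMg, Matrix.sub_apply]
          rw [h1]
          ring
        have hfro2 : Real.sqrt (∑ p : Fin d × Fin d, (((β^2 • Λ⁻¹) - Mg) p.1 p.2)^2)
            ≤ eps^2/4 := by
          rw [hfro]; exact hpad
        have hbound : |φ ⬝ᵥ ((β^2 • Λ⁻¹) *ᵥ φ) - φ ⬝ᵥ (Mg *ᵥ φ)| ≤ eps^2/4 := by
          rw [hdiff]
          calc |φ ⬝ᵥ (((β^2 • Λ⁻¹) - Mg) *ᵥ φ)|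
              ≤ Real.sqrt (∑ p : Fin d × Fin d, (((β^2 • Λ⁻¹) - Mg) p.1 p.2)^2) * (φ ⬝ᵥ φ) := hqb
            _ ≤ (eps^2/4) * 1 := by
                apply mul_le_mul hfro2 hφφ (dot_self_nonneg' φ) (by positivity)
            _ = eps^2/4 := mul_one _
        calc Real.sqrt (|φ ⬝ᵥ ((β^2 • Λ⁻¹) *ᵥ φ) - φ ⬝ᵥ (Mg *ᵥ φ)|)
            ≤ Real.sqrt (eps^2/4) := Real.sqrt_le_sqrt hbound
          _ = eps/2 := by
              rw [show eps^2/4 = (eps/2)^2 by ring, Real.sqrt_sq (by linarith)]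
      calc |(w ⬝ᵥ φ + Real.sqrt (φ ⬝ᵥ ((β^2 • Λ⁻¹) *ᵥ φ)))
            - ((ew pw) ⬝ᵥ φ + Real.sqrt (φ ⬝ᵥ (Mg *ᵥ φ)))|
          = |(w ⬝ᵥ φ - (ew pw) ⬝ᵥ φ)
            + (Real.sqrt (φ ⬝ᵥ ((β^2 • Λ⁻¹) *ᵥ φ)) - Real.sqrt (φ ⬝ᵥ (Mg *ᵥ φ)))| := by
            ring_nf
        _ ≤ |w ⬝ᵥ φ - (ew pw) ⬝ᵥ φ|
            + |Real.sqrt (φ ⬝ᵥ ((β^2 • Λ⁻¹) *ᵥ φ)) - Real.sqrt (φ ⬝ᵥ (Mg *ᵥ φ))| := abs_add_le _ _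
        _ ≤ eps/2 + eps/2 := add_le_add hterm1 hterm2
        _ = eps := by ring
end
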